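/- arXiv:2412.02800 — 16 statements merged into one kernel-verified Lean document; each statement's English description precedes it below -/
import Mathlib

section
/- For every finite simple graph G there exists a finite simple graph H that admits an NB-coloring and contains G as an induced subgraph, and there exists a finite simple graph H' that admits a CNB-coloring and contains G as an induced subgraph. -/
open scoped Classical

/-- An `(R, Rᶜ)`-coloring of `G` is a neighborhood balanced coloring (NB-coloring) if each
vertex has equally many red and blue vertices in its open neighborhood. -/
def SimpleGraph.IsNBColoring {V : Type*} [Fintype V] (G : SimpleGraph V) (R : Finset V) : Prop :=
  ∀ v : V, (G.neighborFinset v ∩ R).card = (G.neighborFinset v ∩ Rᶜ).card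

/-- An `(R, Rᶜ)`-coloring of `G` is a closed neighborhood balanced coloring (CNB-coloring) if each
vertex has equally many red and blue vertices in its closed neighborhood. -/
def SimpleGraph.IsCNBColoring {V : Type*} [Fintype V] (G : SimpleGraph V) (R : Finset V) : Prop :=
  ∀ v : V, (insert v (G.neighborFinset v) ∩ R).card = (insert v (G.neighborFinset v) ∩ Rᶜ).card

section Aux

variable {V : Type*} [Fintype V]

/-- The canonical red set on `V × Fin 2`: second coordinate `0`. -/
noncomputable def redSet (V : Type*) [Fintype V] : Finset (V × Fin 2) :=
  Finset.univ.filter (fun p => p.2 = 0)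

lemma fin2_a : ∀ i : Fin 2, i = 0 → i + 1 ≠ 0 := by decide

lemma fin2_b : ∀ i : Fin 2, ¬i = 0 → i + 1 = 0 := by decide

lemma fin2_add_one_add_one (i : Fin 2) : i + 1 + 1 = i := by fin_cases i <;> decide

/-- Key counting lemma: any finset of `V × Fin 2` whose membership depends only on the
first coordinate is balanced with respect to `redSet V`. -/
lemma key_balanced (S : Finset (V × Fin 2))
    (hS : ∀ v : V, ∀ i j : Fin 2, (v, i) ∈ S → (v, j) ∈ S) :
    (S ∩ redSet V).card = (S ∩ (redSet V)ᶜ).card := by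
  have hR : ∀ q : V × Fin 2, q ∈ redSet V ↔ q.2 = 0 := by
    intro q; simp [redSet]
  apply Finset.card_bij' (i := fun p _ => (p.1, p.2 + 1)) (j := fun p _ => (p.1, p.2 + 1))
  case hi =>
    intro p hp
    rw [Finset.mem_inter] at hp ⊢
    rw [Finset.mem_compl, hR]
    rw [hR] at hp
    exact ⟨hS p.1 p.2 _ hp.1, fin2_a p.2 hp.2⟩
  case hj =>
    intro p hp
    rw [Finset.mem_inter, Finset.mem_compl, hR] at hp
    rw [Finset.mem_inter, hR]
    exact ⟨hS p.1 p.2 _ hp.1, fin2_b p.2 hp.2⟩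
  case left_inv =>
    intro p _
    obtain ⟨a, b⟩ := p
    simp [fin2_add_one_add_one]
  case right_inv =>
    intro p _
    obtain ⟨a, b⟩ := p
    simp [fin2_add_one_add_one]

variable (G : SimpleGraph V)

/-- Blow up each vertex into two nonadjacent twins. -/
noncomputable def blowup : SimpleGraph (V × Fin 2) := G.comap Prod.fst

/-- Blow up each vertex into two adjacent twins. -/
noncomputable def blowup' : SimpleGraph (V × Fin 2) where
  Adj p q := p ≠ q ∧ (G.Adj p.1 q.1 ∨ p.1 = q.1)
  symm := ⟨by
    rintro p q ⟨h1, h2⟩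
    refine ⟨h1.symm, ?_⟩
    rcases h2 with h | h
    · exact Or.inl h.symm
    · exact Or.inr h.symm⟩
  loopless := ⟨fun p h => h.1 rfl⟩

noncomputable def blowupEmb : G ↪g blowup G where
  toFun v := (v, 0)
  inj' := by intro a b h; exact (Prod.ext_iff.mp h).1
  map_rel_iff' := by intro a b; simp [blowup]; exact Iff.rfl

noncomputable def blowupEmb' : G ↪g blowup' G where
  toFun v := (v, 0)
  inj' := by intro a b h; exact (Prod.ext_iff.mp h).1
  map_rel_iff' := by
    intro a b
    simp only [blowup', Function.Embedding.coeFn_mk]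
    constructor
    · rintro ⟨h1, h2 | h2⟩
      · exact h2
      · exact absurd (Prod.ext h2 rfl) h1
    · intro h
      refine ⟨fun he => ?_, Or.inl h⟩
      have : a = b := (Prod.ext_iff.mp he).1
      rw [this] at h
      exact G.irrefl h

lemma blowup_isNB : (blowup G).IsNBColoring (redSet V) := by
  intro p
  have h := key_balanced ((blowup G).neighborFinset p)
    (by intro v i j hv; exact (SimpleGraph.mem_neighborFinset _ _ _).2 ((SimpleGraph.mem_neighborFinset _ p (v, i)).1 hv))
  convert h using 2 <;> (ext q; simp [redSet])

lemma blowup'_closed (p : V × Fin 2) :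
    insert p ((blowup' G).neighborFinset p)
      = Finset.univ.filter (fun q : V × Fin 2 => G.Adj p.1 q.1 ∨ q.1 = p.1) := by
  ext q
  rw [Finset.mem_insert, SimpleGraph.mem_neighborFinset]
  simp only [Finset.mem_insert, SimpleGraph.mem_neighborFinset, blowup',
    Finset.mem_filter, Finset.mem_univ, true_and]
  constructor
  · rintro (rfl | ⟨h1, h2 | h2⟩)
    · exact Or.inr rfl
    · exact Or.inl h2
    · exact Or.inr h2.symm
  · rintro (h | h)
    · refine Or.inr ⟨fun he => ?_, Or.inl h⟩
      rw [he] at h; exact G.irrefl h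
    · by_cases hq : q = p
      · exact Or.inl hq
      · exact Or.inr ⟨Ne.symm hq, Or.inr h.symm⟩

lemma blowup'_isCNB : (blowup' G).IsCNBColoring (redSet V) := by
  intro p
  have h := key_balanced (insert p ((blowup' G).neighborFinset p))
    (by
      intro v i j hv
      rw [blowup'_closed] at hv ⊢
      simp only [Finset.mem_filter, Finset.mem_univ, true_and] at hv ⊢
      exact hv)
  convert h using 2 <;> (ext q; simp [redSet])

variable {U : Type*} [Fintype U]

lemma neighborFinset_comap (H : SimpleGraph V) (e : U ≃ V) (u : U) :
    (H.comap e).neighborFinset u = (H.neighborFinset (e u)).image e.symm := by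
  ext w
  simp only [SimpleGraph.mem_neighborFinset, SimpleGraph.comap_adj, Finset.mem_image]
  constructor
  · intro h; exact ⟨e w, h, e.symm_apply_apply w⟩
  · rintro ⟨x, hx, rfl⟩; rwa [e.apply_symm_apply]

lemma image_compl_equiv (e : U ≃ V) (R : Finset V) :
    (R.image e.symm)ᶜ = Rᶜ.image e.symm := by
  ext u
  simp only [Finset.mem_compl, Finset.mem_image]
  constructor
  · intro h
    exact ⟨e u, fun hR => h ⟨e u, hR, e.symm_apply_apply u⟩, e.symm_apply_apply u⟩
  · rintro ⟨x, hx, rfl⟩ ⟨y, hy, hxy⟩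
    exact hx (by rwa [e.symm.injective hxy] at hy)

lemma card_image_inter (e : U ≃ V) (S R : Finset V) :
    ((S.image e.symm) ∩ (R.image e.symm)).card = (S ∩ R).card := by
  rw [← Finset.image_inter _ _ e.symm.injective,
    Finset.card_image_of_injective _ e.symm.injective]

lemma transfer_NB (H : SimpleGraph V) (e : U ≃ V) (R : Finset V) (h : H.IsNBColoring R) :
    (H.comap e).IsNBColoring (R.image e.symm) := by
  intro u
  erw [neighborFinset_comap, image_compl_equiv, card_image_inter, card_image_inter]
  exact h (e u)

lemma transfer_CNB (H : SimpleGraph V) (e : U ≃ V) (R : Finset V) (h : H.IsCNBColoring R) :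
    (H.comap e).IsCNBColoring (R.image e.symm) := by
  intro u
  have : insert u ((H.comap e).neighborFinset u)
      = (insert (e u) (H.neighborFinset (e u))).image e.symm := by
    rw [neighborFinset_comap, Finset.image_insert, e.symm_apply_apply]
  erw [this, image_compl_equiv, card_image_inter, card_image_inter]
  exact h (e u)

noncomputable def embComap {A B C : Type*} (G : SimpleGraph A) (H : SimpleGraph B)
    (e : C ≃ B) (f : G ↪g H) : G ↪g H.comap e :=
  { toFun := fun v => e.symm (f v)
    inj' := fun a b h => f.injective (e.symm.injective h)
    map_rel_iff' := by
      intro a b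
      simp only [SimpleGraph.comap_adj, Function.Embedding.coeFn_mk, e.apply_symm_apply]
      change H.Adj (e (e.symm (f a))) (e (e.symm (f b))) ↔ G.Adj a b
      rw [e.apply_symm_apply, e.apply_symm_apply]
      exact f.map_rel_iff }

end Aux

/-- Every finite simple graph is an induced subgraph of an NBC graph and of a CNBC graph. -/
theorem every_graph_induced_in_NBC_and_CNBC {V : Type*} [Fintype V] (G : SimpleGraph V) :
    (∃ (m : ℕ) (H : SimpleGraph (Fin m)) (_ : G ↪g H) (R : Finset (Fin m)),
      H.IsNBColoring R) ∧
    (∃ (m : ℕ) (H' : SimpleGraph (Fin m)) (_ : G ↪g H') (R : Finset (Fin m)),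
      H'.IsCNBColoring R) := by
  set m := Fintype.card (V × Fin 2)
  set e : Fin m ≃ (V × Fin 2) := (Fintype.equivFin (V × Fin 2)).symm
  constructor
  · exact ⟨m, (blowup G).comap e, embComap G (blowup G) e (blowupEmb G), _,
      transfer_NB (blowup G) e (redSet V) (blowup_isNB G)⟩
  · exact ⟨m, (blowup' G).comap e, embComap G (blowup' G) e (blowupEmb' G), _,
      transfer_CNB (blowup' G) e (redSet V) (blowup'_isCNB G)⟩
end

section
/- Let G be a finite simple graph and let (R,B) be a partition of its vertex set with |R| = |B|. Then (R,B) is an NB-coloring of G if and only if (R,B) is a CNB-coloring of the complement graph of G. -/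
open scoped Classical

lemma aux_card_iff {V : Type*} [Fintype V] (N M R : Finset V)
    (h : ∀ u, u ∈ M ↔ u ∉ N) (hRB : R.card = Rᶜ.card) :
    (N ∩ R).card = (N ∩ Rᶜ).card ↔ (M ∩ R).card = (M ∩ Rᶜ).card := by
  have hM : M = Nᶜ := by ext u; simp [h u]
  have e1 : Nᶜ ∩ R = R \ N := by ext u; simp [and_comm]
  have e2 : Nᶜ ∩ Rᶜ = Rᶜ \ N := by ext u; simp [and_comm]
  have h1 := Finset.card_inter_add_card_sdiff R N
  have h2 := Finset.card_inter_add_card_sdiff Rᶜ N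
  rw [hM, e1, e2, Finset.inter_comm N R, Finset.inter_comm N Rᶜ] at *
  omega

/-- A coloring with `|R| = |B|` is an NB-coloring of `G` iff it is a CNB-coloring of the
complement of `G`. -/
theorem isNBColoring_iff_isCNBColoring_compl {V : Type*} [Fintype V] (G : SimpleGraph V)
    (R : Finset V) (hRB : R.card = Rᶜ.card) :
    G.IsNBColoring R ↔ Gᶜ.IsCNBColoring R := by
  unfold SimpleGraph.IsNBColoring SimpleGraph.IsCNBColoring
  apply forall_congr'
  intro v
  apply aux_card_iff _ _ _ _ hRB
  intro u
  simp only [Finset.mem_insert, SimpleGraph.mem_neighborFinset, SimpleGraph.compl_adj]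
  constructor
  · rintro (rfl | ⟨_, h⟩)
    · exact G.irrefl
    · exact h
  · intro h
    by_cases hu : u = v
    · exact Or.inl hu
    · exact Or.inr ⟨fun hv => hu hv.symm, h⟩
end

section
/- Let G be any finite simple graph and let H be a finite simple graph admitting a CNB-coloring (R,B) with |R| = |B|. Then the lexicographic product G ∘ H is a CNBC graph. -/
open scoped Classical

/-- The lexicographic product `G ∘ H`: `(g, h)` is adjacent to `(g', h')` iff `g g'` is an edge
of `G`, or `g = g'` and `h h'` is an edge of `H`. -/
def SimpleGraph.lexProd {V W : Type*} (G : SimpleGraph V) (H : SimpleGraph W) :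
    SimpleGraph (V × W) where
  Adj x y := G.Adj x.1 y.1 ∨ (x.1 = y.1 ∧ H.Adj x.2 y.2)
  symm := by
    constructor
    rintro x y (h | ⟨h1, h2⟩)
    · exact Or.inl h.symm
    · exact Or.inr ⟨h1.symm, h2.symm⟩
  loopless := by constructor; rintro x (h | ⟨h1, h2⟩) <;> simp_all

/-- If `H` has a CNB-coloring with equally many red and blue vertices, then for any graph `G`
the lexicographic product `G ∘ H` is a CNBC graph. -/
theorem lexProd_isCNBC {V W : Type*} [Fintype V] [Fintype W]
    (G : SimpleGraph V) (H : SimpleGraph W) (R : Finset W)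
    (hR : H.IsCNBColoring R) (hc : R.card = Rᶜ.card) :
    ∃ R' : Finset (V × W), (G.lexProd H).IsCNBColoring R' := by
  refine ⟨Finset.univ ×ˢ R, fun ⟨g, h⟩ => ?_⟩
  have hnbhd : insert (g, h) ((G.lexProd H).neighborFinset (g, h)) =
      (G.neighborFinset g ×ˢ Finset.univ) ∪ ({g} ×ˢ insert h (H.neighborFinset h)) := by
    ext ⟨a, b⟩
    simp only [Finset.mem_insert, Finset.mem_union, SimpleGraph.mem_neighborFinset]
    simp only [Finset.mem_insert, SimpleGraph.mem_neighborFinset, Finset.mem_union,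
      Finset.mem_product, Finset.mem_univ, Finset.mem_singleton, Prod.mk.injEq,
      SimpleGraph.lexProd, and_true]
    constructor
    · rintro (⟨rfl, rfl⟩ | h' | ⟨rfl, h'⟩)
      · exact Or.inr ⟨rfl, Or.inl rfl⟩
      · exact Or.inl h'
      · exact Or.inr ⟨rfl, Or.inr h'⟩
    · rintro (h' | ⟨rfl, rfl | h'⟩)
      · exact Or.inr (Or.inl h')
      · exact Or.inl ⟨rfl, rfl⟩
      · exact Or.inr (Or.inr ⟨rfl, h'⟩)
  have hcompl : (Finset.univ ×ˢ R)ᶜ = (Finset.univ ×ˢ Rᶜ : Finset (V × W)) := by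
    ext ⟨a, b⟩; simp
  have key : ∀ S : Finset W, (Sᶜ = S → False) → True := fun _ _ => trivial
  have calc1 : ∀ S : Finset W,
      ((insert (g, h) ((G.lexProd H).neighborFinset (g, h))) ∩ (Finset.univ ×ˢ S)).card =
        (G.neighborFinset g).card * S.card + (insert h (H.neighborFinset h) ∩ S).card := by
    intro S
    have e1 : G.neighborFinset g ×ˢ (Finset.univ : Finset W) ∩ Finset.univ ×ˢ S =
        G.neighborFinset g ×ˢ S := by
      ext ⟨a, b⟩; simp
    have e2 : ({g} : Finset V) ×ˢ insert h (H.neighborFinset h) ∩ Finset.univ ×ˢ S =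
        {g} ×ˢ (insert h (H.neighborFinset h) ∩ S) := by
      ext ⟨a, b⟩
      simp only [Finset.mem_inter, Finset.mem_product, Finset.mem_singleton, Finset.mem_univ,
        true_and]
      tauto
    have hdisj : Disjoint (G.neighborFinset g ×ˢ S)
        (({g} : Finset V) ×ˢ (insert h (H.neighborFinset h) ∩ S)) := by
      apply Finset.disjoint_left.mpr
      rintro ⟨a, b⟩ ha hb
      simp only [Finset.mem_product, Finset.mem_singleton,
        SimpleGraph.mem_neighborFinset] at ha hb
      exact G.irrefl (hb.1 ▸ ha.1)
    rw [hnbhd, Finset.union_inter_distrib_right, e1, e2,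
      Finset.card_union_of_disjoint hdisj, Finset.card_product,
      Finset.singleton_product, Finset.card_map]
  trans ((G.neighborFinset g).card * R.card + (insert h (H.neighborFinset h) ∩ R).card)
  · rw [← calc1 R]
    refine congrArg Finset.card ?_
    ext ⟨a, b⟩
    simp
  · rw [hc, hR h, ← calc1 Rᶜ]
    refine (congrArg Finset.card ?_).symm
    ext ⟨a, b⟩
    simp
end

section
/- Let G be a finite simple graph and let (R,B) be a CNB-coloring of G. Then |R| + Σ_{v ∈ R} deg(v) = |B| + Σ_{v ∈ B} deg(v). -/
open scoped Classical

lemma aux_sum {V : Type*} [Fintype V] (G : SimpleGraph V) (S : Finset V) :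
    ∑ v : V, (insert v (G.neighborFinset v) ∩ S).card
      = S.card + ∑ s ∈ S, G.degree s := by
  have key : ∀ v : V, (insert v (G.neighborFinset v) ∩ S).card
      = ∑ s ∈ S, if s ∈ insert v (G.neighborFinset v) then 1 else 0 := by
    intro v
    rw [Finset.sum_ite_mem, Finset.sum_const, smul_eq_mul, mul_one, Finset.inter_comm]
  simp_rw [key]
  rw [Finset.sum_comm]
  have : ∀ s ∈ S, (∑ v : V, if s ∈ insert v (G.neighborFinset v) then 1 else 0)
      = 1 + G.degree s := by
    intro s _
    have hmem : ∀ v : V, s ∈ insert v (G.neighborFinset v) ↔ v ∈ insert s (G.neighborFinset s) := by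
      intro v
      simp [eq_comm, G.adj_comm]
    simp_rw [hmem]
    rw [Finset.sum_ite_mem, Finset.univ_inter, Finset.sum_const, smul_eq_mul, mul_one,
      Finset.card_insert_of_notMem (by simp), SimpleGraph.card_neighborFinset_eq_degree]
    omega
  rw [Finset.sum_congr rfl this, Finset.sum_add_distrib]
  simp [add_comm]

/-- For any CNB-coloring `(R, B)` of a graph `G`,
`|R| + Σ_{v ∈ R} deg(v) = |B| + Σ_{v ∈ B} deg(v)`. -/
theorem cnb_degree_sum {V : Type*} [Fintype V] (G : SimpleGraph V) (R : Finset V)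
    (h : G.IsCNBColoring R) :
    R.card + ∑ v ∈ R, G.degree v = Rᶜ.card + ∑ v ∈ Rᶜ, G.degree v := by
  have := aux_sum G R
  have := aux_sum G Rᶜ
  have hsum : ∑ v : V, (insert v (G.neighborFinset v) ∩ R).card
      = ∑ v : V, (insert v (G.neighborFinset v) ∩ Rᶜ).card :=
    Finset.sum_congr rfl fun v _ => h v
  omega
end

section
/- Let G be a finite simple graph and let (R,B) be a CNB-coloring of G with |R| = |B|. Then the number of edges of G with both endpoints in R equals the number of edges of G with both endpoints in B. -/
open scoped Classical

/-- The set of edges of `G` with both endpoints in `S`. -/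
noncomputable def SimpleGraph.edgesWithin {V : Type*} [Fintype V] (G : SimpleGraph V)
    (S : Finset V) : Finset (Sym2 V) :=
  G.edgeFinset.filter (fun e => ∀ v ∈ e, v ∈ S)

lemma twice_edgesWithin {V : Type*} [Fintype V] (G : SimpleGraph V) (S : Finset V) :
    2 * (G.edgesWithin S).card = ∑ v ∈ S, (G.neighborFinset v ∩ S).card := by
  classical
  let G' : SimpleGraph V :=
    { Adj := fun a b => G.Adj a b ∧ a ∈ S ∧ b ∈ S
      symm := by constructor; intro a b ⟨h1, h2, h3⟩; exact ⟨h1.symm, h3, h2⟩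
      loopless := by constructor; intro a ⟨h1, _⟩; exact G.loopless.irrefl a h1 }
  have hedge : G'.edgeFinset = G.edgesWithin S := by
    ext e
    induction e using Sym2.ind with
    | _ a b =>
      simp [SimpleGraph.edgesWithin, SimpleGraph.mem_edgeFinset, G'.mem_edgeSet, Sym2.mem_iff,
        G.mem_edgeSet, G']
  have hdeg : ∀ v : V, G'.degree v = if v ∈ S then (G.neighborFinset v ∩ S).card else 0 := by
    intro v
    by_cases hv : v ∈ S
    · simp only [hv, if_true, SimpleGraph.degree]
      congr 1
      ext w
      simp [SimpleGraph.mem_neighborFinset, G'.mem_neighborFinset, hv, G']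
    · simp only [hv, if_false, SimpleGraph.degree]
      rw [Finset.card_eq_zero]
      ext w
      simp [SimpleGraph.mem_neighborFinset]
      tauto
  have := G'.sum_degrees_eq_twice_card_edges
  rw [hedge] at this
  rw [← this]
  rw [Finset.sum_congr rfl (fun v _ => hdeg v)]
  rw [Finset.sum_ite_mem, Finset.univ_inter]

lemma cross_symm {V : Type*} [Fintype V] (G : SimpleGraph V) (R : Finset V) :
    ∑ v ∈ R, (G.neighborFinset v ∩ Rᶜ).card = ∑ v ∈ Rᶜ, (G.neighborFinset v ∩ R).card := by
  classical
  have key : ∀ (A B : Finset V) (v : V), (G.neighborFinset v ∩ B).card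
      = ∑ w ∈ B, if G.Adj v w then 1 else 0 := by
    intro A B v
    rw [Finset.inter_comm, ← Finset.filter_mem_eq_inter, Finset.card_filter]
    simp [SimpleGraph.mem_neighborFinset]
  calc ∑ v ∈ R, (G.neighborFinset v ∩ Rᶜ).card
      = ∑ v ∈ R, ∑ w ∈ Rᶜ, if G.Adj v w then 1 else 0 := by
        exact Finset.sum_congr rfl fun v _ => key R Rᶜ v
    _ = ∑ w ∈ Rᶜ, ∑ v ∈ R, if G.Adj v w then 1 else 0 := Finset.sum_comm
    _ = ∑ w ∈ Rᶜ, (G.neighborFinset w ∩ R).card := by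
        refine Finset.sum_congr rfl fun w _ => ?_
        rw [key Rᶜ R w]
        exact Finset.sum_congr rfl fun v _ => by simp [G.adj_comm]


/-- In a CNB-coloring with `|R| = |B|`, the number of edges with both endpoints red equals the
number of edges with both endpoints blue. -/
theorem cnb_monochromatic_edges_eq {V : Type*} [Fintype V] (G : SimpleGraph V) (R : Finset V)
    (h : G.IsCNBColoring R) (hc : R.card = Rᶜ.card) :
    (G.edgesWithin R).card = (G.edgesWithin Rᶜ).card := by
  classical
  have hR : ∀ v ∈ R, (G.neighborFinset v ∩ R).card + 1 = (G.neighborFinset v ∩ Rᶜ).card := by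
    intro v hv
    have hv' : v ∉ G.neighborFinset v := by simp
    have h1 : insert v (G.neighborFinset v) ∩ R = insert v (G.neighborFinset v ∩ R) := by
      rw [Finset.insert_inter_of_mem hv]
    have h2 : insert v (G.neighborFinset v) ∩ Rᶜ = G.neighborFinset v ∩ Rᶜ := by
      rw [Finset.insert_inter_of_notMem (by simpa using hv)]
    have := h v
    rw [h1, h2, Finset.card_insert_of_notMem (fun hmem => hv' (Finset.mem_inter.mp hmem).1)]
      at this
    omega
  have hB : ∀ v ∈ Rᶜ, (G.neighborFinset v ∩ Rᶜ).card + 1 = (G.neighborFinset v ∩ R).card := by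
    intro v hv
    have hv' : v ∉ G.neighborFinset v := by simp
    have hvR : v ∉ R := by simpa using hv
    have h1 : insert v (G.neighborFinset v) ∩ Rᶜ = insert v (G.neighborFinset v ∩ Rᶜ) := by
      rw [Finset.insert_inter_of_mem hv]
    have h2 : insert v (G.neighborFinset v) ∩ R = G.neighborFinset v ∩ R := by
      rw [Finset.insert_inter_of_notMem hvR]
    have := h v
    rw [h1, h2, Finset.card_insert_of_notMem (fun hmem => hv' (Finset.mem_inter.mp hmem).1)]
      at this
    omega
  have sumR : (∑ v ∈ R, (G.neighborFinset v ∩ R).card) + R.card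
      = ∑ v ∈ R, (G.neighborFinset v ∩ Rᶜ).card := by
    rw [Finset.card_eq_sum_ones _, ← Finset.sum_add_distrib]
    exact Finset.sum_congr rfl hR
  have sumB : (∑ v ∈ Rᶜ, (G.neighborFinset v ∩ Rᶜ).card) + Rᶜ.card
      = ∑ v ∈ Rᶜ, (G.neighborFinset v ∩ R).card := by
    rw [Finset.card_eq_sum_ones _, ← Finset.sum_add_distrib]
    exact Finset.sum_congr rfl hB
  have e1 := twice_edgesWithin G R
  have e2 := twice_edgesWithin G Rᶜ
  have e3 := cross_symm G R
  omega
end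

section
/- Let G be a finite simple graph that admits a CNB-coloring. If the number of edges of G is even, then the number of vertices of G is congruent to 0 modulo 4; if the number of edges of G is odd, then the number of vertices of G is congruent to 2 modulo 4. -/
open scoped Classical

/-- If `G` is a CNBC graph, then: if `G` has an even number of edges then `|V(G)| ≡ 0 (mod 4)`,
and if `G` has an odd number of edges then `|V(G)| ≡ 2 (mod 4)`. -/
theorem cnbc_card_mod_four {V : Type*} [Fintype V] (G : SimpleGraph V)
    (h : ∃ R : Finset V, G.IsCNBColoring R) :
    (Even G.edgeFinset.card → Fintype.card V % 4 = 0) ∧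
    (Odd G.edgeFinset.card → Fintype.card V % 4 = 2) := by
  classical
  obtain ⟨R, hR⟩ := h
  set N : V → Finset V := fun v => insert v (G.neighborFinset v) with hN
  set f : V → ℕ := fun v => (N v ∩ R).card with hf
  -- each closed neighborhood splits evenly
  have hcard : ∀ v, (N v).card = 2 * f v := by
    intro v
    have h2 : (N v ∩ R).card + (N v ∩ Rᶜ).card = (N v).card := by
      have : N v ∩ Rᶜ = N v \ R := by
        ext x; simp [Finset.mem_sdiff]
      rw [this]
      exact Finset.card_inter_add_card_sdiff _ _
    have h1 : (N v ∩ R).card = (N v ∩ Rᶜ).card := hR v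
    simp only [hf]
    omega
  have hNcard : ∀ v, (N v).card = G.degree v + 1 := by
    intro v
    rw [hN]
    rw [Finset.card_insert_of_notMem (by simp)]
    rw [SimpleGraph.card_neighborFinset_eq_degree]
  -- symmetry of closed neighborhoods
  have hsym : ∀ v r : V, v ∈ N r ↔ r ∈ N v := by
    intro v r
    simp only [hN, Finset.mem_insert, SimpleGraph.mem_neighborFinset]
    constructor
    · rintro (rfl | h) ; · left; rfl
      · right; exact h.symm
    · rintro (rfl | h) ; · left; rfl
      · right; exact h.symm
  -- double counting
  have hswap : ∑ v, f v = ∑ r ∈ R, (N r).card := by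
    have hstep : ∀ v, f v = ∑ r ∈ R, if v ∈ N r then 1 else 0 := by
      intro v
      have : N v ∩ R = R.filter (fun r => v ∈ N r) := by
        ext x
        simp [Finset.mem_filter, Finset.mem_inter, hsym v x, and_comm]
      simp only [hf, this, Finset.card_filter]
    calc ∑ v, f v = ∑ v, ∑ r ∈ R, if v ∈ N r then 1 else 0 := by
          exact Finset.sum_congr rfl fun v _ => hstep v
      _ = ∑ r ∈ R, ∑ v, if v ∈ N r then 1 else 0 := Finset.sum_comm
      _ = ∑ r ∈ R, (N r).card := by
          refine Finset.sum_congr rfl fun r _ => ?_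
          rw [← Finset.card_filter]
          congr 1
          ext x; simp
  -- total count
  have htot : ∑ v, (N v).card = 2 * G.edgeFinset.card + Fintype.card V := by
    calc ∑ v, (N v).card = ∑ v, (G.degree v + 1) := by
          exact Finset.sum_congr rfl fun v _ => hNcard v
      _ = (∑ v, G.degree v) + Fintype.card V := by
          rw [Finset.sum_add_distrib, Finset.sum_const, smul_eq_mul, mul_one,
            Finset.card_univ]
      _ = 2 * G.edgeFinset.card + Fintype.card V := by
          rw [SimpleGraph.sum_degrees_eq_twice_card_edges]
  have hS : 2 * ∑ v, f v = 2 * G.edgeFinset.card + Fintype.card V := by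
    rw [← htot, Finset.mul_sum]
    exact Finset.sum_congr rfl fun v _ => (hcard v).symm
  have hT : ∑ v, f v = 2 * ∑ r ∈ R, f r := by
    rw [hswap, Finset.mul_sum]
    exact Finset.sum_congr rfl fun r _ => hcard r
  have key : 4 * ∑ r ∈ R, f r = 2 * G.edgeFinset.card + Fintype.card V := by
    omega
  constructor
  · rintro ⟨k, hk⟩; omega
  · rintro ⟨k, hk⟩; omega
end

section
/- Let G be a finite simple graph and let (R,B) be a CNB-coloring of G. Then the number of vertices in R whose degree is congruent to 3 modulo 4 is even, the number of vertices in B whose degree is congruent to 3 modulo 4 is even, and the number of vertices of G whose degree is congruent to 1 modulo 4 is even. -/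
open scoped Classical

namespace CNBAux

variable {V : Type*} [Fintype V] (G : SimpleGraph V)

/-- The closed neighborhood of `v` as a Finset. -/
noncomputable def cnbr (v : V) : Finset V := insert v (G.neighborFinset v)

lemma mem_cnbr_symm {u v : V} : u ∈ cnbr G v ↔ v ∈ cnbr G u := by
  simp only [cnbr, Finset.mem_insert, SimpleGraph.mem_neighborFinset]
  constructor
  · rintro (rfl | h)
    · exact Or.inl rfl
    · exact Or.inr h.symm
  · rintro (rfl | h)
    · exact Or.inl rfl
    · exact Or.inr h.symm

lemma card_cnbr (v : V) : (cnbr G v).card = G.degree v + 1 := by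
  rw [cnbr, Finset.card_insert_of_notMem (G.notMem_neighborFinset_self v),
    G.card_neighborFinset_eq_degree]

/-- The fundamental degree relation from a CNB coloring. -/
lemma deg_rel (R : Finset V) (h : G.IsCNBColoring R) (v : V) :
    G.degree v + 1 = 2 * ((cnbr G v) ∩ R).card := by
  have h3 := h v
  have h1 : (cnbr G v) ∩ Rᶜ = (cnbr G v) \ R := (Finset.sdiff_eq_inter_compl _ _).symm
  have h2 : ((cnbr G v) ∩ R).card + ((cnbr G v) \ R).card = (cnbr G v).card :=
    Finset.card_inter_add_card_sdiff _ _
  have h4 := card_cnbr G v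
  simp only [cnbr] at h1 h2 h4 ⊢
  rw [h1] at h3
  omega

/-- The same degree relation for the complement. -/
lemma deg_rel_compl (R : Finset V) (h : G.IsCNBColoring R) (v : V) :
    G.degree v + 1 = 2 * ((cnbr G v) ∩ Rᶜ).card := by
  rw [deg_rel G R h v]
  have h3 := h v
  simp only [cnbr] at *
  omega

/-- Express the (casted) cardinality of `N[v] ∩ S` as a sum of indicators. -/
lemma cast_card_inter (S : Finset V) (v : V) :
    ((((cnbr G v) ∩ S).card : ZMod 2)) =
      ∑ u ∈ S, if u ∈ cnbr G v then (1 : ZMod 2) else 0 := by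
  have : (cnbr G v) ∩ S = S.filter (fun u => u ∈ cnbr G v) := by
    ext u; simp [and_comm]
  rw [this, Finset.sum_boole]

/-- Double counting over a symmetric reflexive relation: the diagonal survives mod 2. -/
lemma double_sum (S : Finset V) :
    ∑ v ∈ S, ∑ u ∈ S, (if u ∈ cnbr G v then (1 : ZMod 2) else 0) = (S.card : ZMod 2) := by
  have hsplit : ∀ v ∈ S, ∑ u ∈ S, (if u ∈ cnbr G v then (1 : ZMod 2) else 0)
      = 1 + ∑ u ∈ S.erase v, (if u ∈ cnbr G v then (1 : ZMod 2) else 0) := by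
    intro v hv
    rw [← Finset.add_sum_erase S _ hv]
    congr 1
    simp [cnbr]
  rw [Finset.sum_congr rfl hsplit, Finset.sum_add_distrib, Finset.sum_const, nsmul_eq_mul,
    mul_one]
  have hoff : ∑ v ∈ S, ∑ u ∈ S.erase v, (if u ∈ cnbr G v then (1 : ZMod 2) else 0)
      = ∑ p ∈ S.offDiag, (if p.2 ∈ cnbr G p.1 then (1 : ZMod 2) else 0) := by
    rw [Finset.sum_sigma']
    apply Finset.sum_nbij' (fun x => (x.1, x.2)) (fun p => ⟨p.1, p.2⟩)
    · rintro ⟨a, b⟩ hab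
      simp only [Finset.mem_sigma, Finset.mem_erase] at hab
      simp only [Finset.mem_offDiag]
      exact ⟨hab.1, hab.2.2, fun hh => hab.2.1 hh.symm⟩
    · rintro ⟨a, b⟩ hab
      simp only [Finset.mem_offDiag] at hab
      simp only [Finset.mem_sigma, Finset.mem_erase]
      exact ⟨hab.1, fun hh => hab.2.2 hh.symm, hab.2.1⟩
    · rintro ⟨a, b⟩ _; rfl
    · rintro ⟨a, b⟩ _; rfl
    · rintro ⟨a, b⟩ _; rfl
  rw [hoff]
  have hzero : ∑ p ∈ S.offDiag, (if p.2 ∈ cnbr G p.1 then (1 : ZMod 2) else 0) = 0 := by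
    have hg1 : ∀ (p : V × V), p ∈ S.offDiag →
        (if p.2 ∈ cnbr G p.1 then (1 : ZMod 2) else 0)
          + (if p.swap.2 ∈ cnbr G p.swap.1 then (1 : ZMod 2) else 0) = 0 := by
      intro p _
      have hsym : (p.swap.2 ∈ cnbr G p.swap.1) ↔ (p.2 ∈ cnbr G p.1) := by
        simp only [Prod.fst_swap, Prod.snd_swap]
        exact mem_cnbr_symm G
      by_cases hc : p.2 ∈ cnbr G p.1
      · rw [if_pos hc, if_pos (hsym.mpr hc)]; decide
      · rw [if_neg hc, if_neg (fun hh => hc (hsym.mp hh))]; decide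
    have hmem : ∀ (p : V × V), p ∈ S.offDiag → p.swap ∈ S.offDiag := by
      intro p hp
      rw [Finset.mem_offDiag] at hp ⊢
      exact ⟨hp.2.1, hp.1, fun hh => hp.2.2 hh.symm⟩
    have hne : ∀ (p : V × V), p ∈ S.offDiag →
        (if p.2 ∈ cnbr G p.1 then (1 : ZMod 2) else 0) ≠ 0 → p.swap ≠ p := by
      intro p hp _
      have hd := (Finset.mem_offDiag.mp hp).2.2
      intro hc
      apply hd
      have := congrArg Prod.fst hc
      simpa [Prod.fst_swap] using this.symm
    exact Finset.sum_involution (fun p _ => p.swap) hg1 hne (fun p hp => hmem p hp)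
      (fun p _ => Prod.swap_swap p)
  rw [hzero, add_zero]

/-- Pointwise: the parity of `|N[v] ∩ S|` is determined by `deg v mod 4`. -/
lemma cast_card_eq_ite (S : Finset V) (v : V)
    (hS : G.degree v + 1 = 2 * ((cnbr G v) ∩ S).card) :
    ((((cnbr G v) ∩ S).card : ZMod 2)) = if G.degree v % 4 = 3 then 0 else 1 := by
  set c := ((cnbr G v) ∩ S).card with hc
  have hmod : c % 2 = if G.degree v % 4 = 3 then 0 else 1 := by
    by_cases h3 : G.degree v % 4 = 3 <;> simp [h3] <;> omega
  rw [← ZMod.natCast_mod c 2, hmod]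
  by_cases h3 : G.degree v % 4 = 3 <;> simp [h3]

/-- Generic key lemma: if every closed neighborhood meets `S` in exactly half its size,
then the number of vertices of `S` with degree `≡ 3 mod 4` is even. -/
lemma key (S : Finset V) (hS : ∀ v : V, G.degree v + 1 = 2 * ((cnbr G v) ∩ S).card) :
    Even (S.filter (fun v => G.degree v % 4 = 3)).card := by
  rw [Nat.even_iff, ← Nat.dvd_iff_mod_eq_zero, ← ZMod.natCast_eq_zero_iff]
  have h1 : ((S.filter (fun v => G.degree v % 4 = 3)).card : ZMod 2)
      = ∑ v ∈ S, if G.degree v % 4 = 3 then (1 : ZMod 2) else 0 := by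
    rw [Finset.sum_boole]
  rw [h1]
  have h2 : ∀ v ∈ S, (if G.degree v % 4 = 3 then (1 : ZMod 2) else 0)
      = 1 + (((cnbr G v) ∩ S).card : ZMod 2) := by
    intro v _
    rw [cast_card_eq_ite G S v (hS v)]
    by_cases h3 : G.degree v % 4 = 3
    · simp [h3]
    · simp only [h3, if_false]; decide
  rw [Finset.sum_congr rfl h2, Finset.sum_add_distrib, Finset.sum_const, nsmul_eq_mul, mul_one]
  have h3 : ∑ v ∈ S, (((cnbr G v) ∩ S).card : ZMod 2) = (S.card : ZMod 2) := by
    rw [Finset.sum_congr rfl (fun v _ => cast_card_inter G S v)]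
    exact double_sum G S
  rw [h3]
  exact CharTwo.add_self_eq_zero _

/-- Key lemma for the third part: the number of vertices of degree `≡ 1 mod 4` is even. -/
lemma key2 (R : Finset V) (hR : ∀ v : V, G.degree v + 1 = 2 * ((cnbr G v) ∩ R).card) :
    Even (Finset.univ.filter (fun v : V => G.degree v % 4 = 1)).card := by
  rw [Nat.even_iff, ← Nat.dvd_iff_mod_eq_zero, ← ZMod.natCast_eq_zero_iff]
  have h1 : ((Finset.univ.filter (fun v : V => G.degree v % 4 = 1)).card : ZMod 2)
      = ∑ v : V, if G.degree v % 4 = 1 then (1 : ZMod 2) else 0 := by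
    rw [Finset.sum_boole]
  rw [h1]
  have h2 : ∀ v : V, (if G.degree v % 4 = 1 then (1 : ZMod 2) else 0)
      = (((cnbr G v) ∩ R).card : ZMod 2) := by
    intro v
    rw [cast_card_eq_ite G R v (hR v)]
    have hodd : G.degree v % 2 = 1 := by have := hR v; omega
    by_cases h3 : G.degree v % 4 = 3
    · have : ¬ (G.degree v % 4 = 1) := by omega
      simp [h3, this]
    · have : G.degree v % 4 = 1 := by omega
      simp [h3, this]
  rw [Finset.sum_congr rfl (fun v _ => h2 v)]
  rw [Finset.sum_congr rfl (fun v _ => cast_card_inter G R v)]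
  rw [Finset.sum_comm]
  have h4 : ∀ u ∈ R, ∑ v : V, (if u ∈ cnbr G v then (1 : ZMod 2) else 0) = 0 := by
    intro u _
    have : ∀ v : V, (if u ∈ cnbr G v then (1 : ZMod 2) else 0)
        = (if v ∈ cnbr G u then (1 : ZMod 2) else 0) := by
      intro v
      by_cases hc : u ∈ cnbr G v
      · rw [if_pos hc, if_pos ((mem_cnbr_symm G).mp hc)]
      · rw [if_neg hc, if_neg (fun hh => hc ((mem_cnbr_symm G).mpr hh))]
    rw [Finset.sum_congr rfl (fun v _ => this v)]
    have h5 : (∑ v : V, if v ∈ cnbr G u then (1 : ZMod 2) else 0)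
        = (((cnbr G u) ∩ Finset.univ).card : ZMod 2) := by
      rw [cast_card_inter G Finset.univ u]
    rw [h5, Finset.inter_univ, card_cnbr, hR u]
    push_cast
    rw [show ((2 : ZMod 2)) = 0 by decide, zero_mul]
  exact Finset.sum_eq_zero h4

end CNBAux

/-- In any CNB-coloring of `G`, the number of red vertices of degree `≡ 3 (mod 4)` is even, the
number of blue vertices of degree `≡ 3 (mod 4)` is even, and the number of vertices of degree
`≡ 1 (mod 4)` is even. -/
theorem cnb_degree_parity_counts {V : Type*} [Fintype V] (G : SimpleGraph V) (R : Finset V)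
    (h : G.IsCNBColoring R) :
    Even (R.filter (fun v => G.degree v % 4 = 3)).card ∧
    Even (Rᶜ.filter (fun v => G.degree v % 4 = 3)).card ∧
    Even (Finset.univ.filter (fun v : V => G.degree v % 4 = 1)).card := by
  refine ⟨CNBAux.key G R (CNBAux.deg_rel G R h),
    CNBAux.key G Rᶜ (CNBAux.deg_rel_compl G R h),
    CNBAux.key2 G R (CNBAux.deg_rel G R h)⟩
end

section
/- If T is a finite tree (a connected acyclic simple graph) that admits a CNB-coloring, then the number of vertices of T is congruent to 2 modulo 4. -/
open scoped Classical

section aux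

variable {V : Type*} [Fintype V] (T : SimpleGraph V)

private lemma closed_card (v : V) :
    (insert v (T.neighborFinset v)).card = T.degree v + 1 := by
  rw [Finset.card_insert_of_notMem (by simp), SimpleGraph.card_neighborFinset_eq_degree]

private lemma closed_split (v : V) (R : Finset V) :
    (insert v (T.neighborFinset v) ∩ R).card + (insert v (T.neighborFinset v) ∩ Rᶜ).card
      = T.degree v + 1 := by
  rw [← closed_card T v]
  rw [← Finset.card_union_of_disjoint (by
    apply Finset.disjoint_left.2
    intro a ha hb
    exact (Finset.mem_compl.1 (Finset.mem_inter.1 hb).2) (Finset.mem_inter.1 ha).2)]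
  congr 1
  rw [← Finset.inter_union_distrib_left, Finset.union_compl, Finset.inter_univ]

private lemma double_count (R : Finset V) :
    (∑ v : V, (insert v (T.neighborFinset v) ∩ R).card)
      = ∑ u ∈ R, (T.degree u + 1) := by
  have key : ∀ u v : V, u ∈ insert v (T.neighborFinset v) ↔ v ∈ insert u (T.neighborFinset u) := by
    intro u v
    simp only [Finset.mem_insert, SimpleGraph.mem_neighborFinset]
    rw [eq_comm, SimpleGraph.adj_comm]
  calc (∑ v : V, (insert v (T.neighborFinset v) ∩ R).card)
      = ∑ v : V, ∑ u ∈ R, (if u ∈ insert v (T.neighborFinset v) then 1 else 0) := by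
        refine Finset.sum_congr rfl fun v _ => ?_
        rw [Finset.inter_comm, ← Finset.filter_mem_eq_inter, Finset.card_filter]
    _ = ∑ u ∈ R, ∑ v : V, (if u ∈ insert v (T.neighborFinset v) then 1 else 0) :=
        Finset.sum_comm
    _ = ∑ u ∈ R, (T.degree u + 1) := by
        refine Finset.sum_congr rfl fun u _ => ?_
        simp only [key u]
        rw [← Finset.card_filter, Finset.filter_mem_eq_inter, Finset.univ_inter, closed_card]

end aux

/-- If a finite tree admits a CNB-coloring, then its number of vertices is `≡ 2 (mod 4)`. -/
theorem cnbc_tree_card_mod_four {V : Type*} [Fintype V] (T : SimpleGraph V)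
    (hT : T.IsTree) (h : ∃ R : Finset V, T.IsCNBColoring R) :
    Fintype.card V % 4 = 2 := by
  obtain ⟨R, hR⟩ := h
  -- every vertex has odd degree
  have hodd : ∀ v : V, T.degree v % 2 = 1 := by
    intro v
    have := closed_split T v R
    rw [← hR v] at this
    omega
  -- total sum
  have hsum : (∑ v : V, (insert v (T.neighborFinset v) ∩ R).card)
      + (∑ v : V, (insert v (T.neighborFinset v) ∩ Rᶜ).card)
      = (∑ v : V, T.degree v) + Fintype.card V := by
    rw [← Finset.sum_add_distrib]
    simp only [closed_split T _ R]
    rw [Finset.sum_add_distrib]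
    simp [Finset.card_univ]
  have hEq : (∑ v : V, (insert v (T.neighborFinset v) ∩ R).card)
      = (∑ v : V, (insert v (T.neighborFinset v) ∩ Rᶜ).card) :=
    Finset.sum_congr rfl fun v _ => hR v
  have hdeg : (∑ v : V, T.degree v) = 2 * T.edgeFinset.card :=
    T.sum_degrees_eq_twice_card_edges
  have hedge : T.edgeFinset.card + 1 = Fintype.card V := hT.card_edgeFinset
  -- S is even
  have hS : 2 ∣ (∑ v : V, (insert v (T.neighborFinset v) ∩ R).card) := by
    rw [double_count T R]
    exact Finset.dvd_sum fun u _ => by have := hodd u; omega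
  obtain ⟨k, hk⟩ := hS
  omega
end

section
/- If T is a finite tree with n vertices that admits a CNB-coloring, then the maximum degree of T is at most n/2. -/
open scoped Classical

lemma card_inter_compl_split {V : Type*} [Fintype V] (s R : Finset V) :
    (s ∩ R).card + (s ∩ Rᶜ).card = s.card := by
  classical
  rw [← Finset.card_union_of_disjoint, ← Finset.inter_union_distrib_left,
    Finset.union_compl, Finset.inter_univ]
  exact Finset.disjoint_right.2 (by simp +contextual)

/-- If a finite tree on `n` vertices admits a CNB-coloring, then its maximum degree is at most
`n / 2`. -/
theorem cnbc_tree_maxDegree {V : Type*} [Fintype V] (T : SimpleGraph V)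
    (hT : T.IsTree) (h : ∃ R : Finset V, T.IsCNBColoring R) :
    ∀ v : V, T.degree v ≤ Fintype.card V / 2 := by
  intro v
  obtain ⟨R0, hR0⟩ := h
  -- WLOG `v` is red
  obtain ⟨R, hR, hvR⟩ : ∃ R : Finset V, T.IsCNBColoring R ∧ v ∈ R := by
    by_cases hv : v ∈ R0
    · exact ⟨R0, hR0, hv⟩
    · refine ⟨R0ᶜ, fun u => ?_, by simpa using hv⟩
      rw [compl_compl]; exact (hR0 u).symm
  -- closed neighborhood card
  have hclosed : ∀ u : V, (insert u (T.neighborFinset u)).card = T.degree u + 1 := by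
    intro u
    rw [Finset.card_insert_of_notMem (by simp), T.card_neighborFinset_eq_degree]
  -- every degree is odd, in particular positive
  have hodd : ∀ u : V, T.degree u + 1 =
      2 * (insert u (T.neighborFinset u) ∩ R).card := by
    intro u
    have h2 := card_inter_compl_split (insert u (T.neighborFinset u)) R
    have h3 := hR u
    rw [hclosed u] at h2
    omega
  have hdeg1 : ∀ u : V, 1 ≤ T.degree u := by
    intro u; have h1 := hodd u; omega
  -- red neighbors of v have degree ≥ 3
  have hred3 : ∀ u ∈ T.neighborFinset v ∩ R, 3 ≤ T.degree u := by
    intro u hu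
    rw [Finset.mem_inter, SimpleGraph.mem_neighborFinset] at hu
    obtain ⟨hadj, huR⟩ := hu
    have hne : T.degree u ≠ 1 := by
      intro h1
      have hnb : T.neighborFinset u = {v} := by
        refine Finset.eq_singleton_iff_unique_mem.2
          ⟨by simpa [SimpleGraph.mem_neighborFinset] using hadj.symm, ?_⟩
        intro w hw
        have hc : (T.neighborFinset u).card = 1 := by
          rw [T.card_neighborFinset_eq_degree, h1]
        obtain ⟨x, hx⟩ := Finset.card_eq_one.1 hc
        rw [hx] at hw
        simp only [Finset.mem_singleton] at hw
        have hvx : v ∈ ({x} : Finset V) := by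
          rw [← hx]; simpa [SimpleGraph.mem_neighborFinset] using hadj.symm
        simp only [Finset.mem_singleton] at hvx
        rw [hw, hvx]
      have := hR u
      have huv : u ≠ v := hadj.ne'
      rw [hnb] at this
      have h1' : insert u ({v} : Finset V) ∩ R = {u, v} := by
        ext w
        simp only [Finset.mem_inter, Finset.mem_insert, Finset.mem_singleton]
        constructor
        · rintro ⟨h, _⟩; exact h
        · rintro (rfl | rfl) <;> simp_all
      have h2' : insert u ({v} : Finset V) ∩ Rᶜ = ∅ := by
        ext w
        simp only [Finset.mem_inter, Finset.mem_insert, Finset.mem_singleton,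
          Finset.mem_compl, Finset.notMem_empty, iff_false, not_and]
        rintro (rfl | rfl) <;> simp_all
      rw [h1', h2'] at this
      simp [Finset.card_insert_of_notMem, huv] at this
    have := hodd u
    omega
  set S := T.neighborFinset v with hS
  set d := T.degree v with hd
  set n := Fintype.card V with hn
  -- red/blue neighbor counts
  have hcount : (S ∩ R).card + 1 = (S ∩ Rᶜ).card := by
    have := hR v
    have e1 : insert v S ∩ R = insert v (S ∩ R) := by
      ext w; simp only [Finset.mem_inter, Finset.mem_insert]
      constructor
      · rintro ⟨(rfl | hw), hwR⟩
        · exact Or.inl rfl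
        · exact Or.inr ⟨hw, hwR⟩
      · rintro (rfl | ⟨hw, hwR⟩) <;> simp_all
    have e2 : insert v S ∩ Rᶜ = S ∩ Rᶜ := by
      ext w; simp only [Finset.mem_inter, Finset.mem_insert, Finset.mem_compl]
      constructor
      · rintro ⟨(rfl | hw), hwR⟩
        · exact absurd hvR hwR
        · exact ⟨hw, hwR⟩
      · rintro ⟨hw, hwR⟩; exact ⟨Or.inr hw, hwR⟩
    rw [e1, e2] at this
    have hvnS : v ∉ S ∩ R := by simp [hS]
    rw [Finset.card_insert_of_notMem hvnS] at this
    omega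
  have hcard : (S ∩ R).card + (S ∩ Rᶜ).card = d := by
    have := card_inter_compl_split S R
    rwa [hS, T.card_neighborFinset_eq_degree] at this
  -- degree sum
  have hsum : ∑ u : V, T.degree u = 2 * (n - 1) := by
    have he := hT.card_edgeFinset
    rw [T.sum_degrees_eq_twice_card_edges]
    omega
  have hA : (insert v S).card = d + 1 := hclosed v
  have hAsub : insert v S ⊆ Finset.univ := Finset.subset_univ _
  have hsplit : ∑ u ∈ Finset.univ \ insert v S, T.degree u
      + ∑ u ∈ insert v S, T.degree u = ∑ u : V, T.degree u :=
    Finset.sum_sdiff hAsub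
  have hrest : (Finset.univ \ insert v S).card ≤ ∑ u ∈ Finset.univ \ insert v S, T.degree u := by
    calc (Finset.univ \ insert v S).card = ∑ _u ∈ Finset.univ \ insert v S, 1 := by
          simp
      _ ≤ _ := Finset.sum_le_sum fun u _ => hdeg1 u
  have hrestcard : (Finset.univ \ insert v S).card = n - (d + 1) := by
    rw [Finset.card_sdiff_of_subset hAsub, hA, Finset.card_univ]
  have hvnS : v ∉ S := by simp [hS]
  have hsumA : ∑ u ∈ insert v S, T.degree u = d + ∑ u ∈ S, T.degree u := by
    rw [Finset.sum_insert hvnS]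
  have hSsplit : ∑ u ∈ S ∩ R, T.degree u + ∑ u ∈ S ∩ Rᶜ, T.degree u
      = ∑ u ∈ S, T.degree u := by
    rw [show S ∩ Rᶜ = S \ (S ∩ R) by
      ext w; simp only [Finset.mem_inter, Finset.mem_compl, Finset.mem_sdiff, not_and]
      tauto]
    rw [add_comm]
    exact Finset.sum_sdiff Finset.inter_subset_left
  have hSr : 3 * (S ∩ R).card ≤ ∑ u ∈ S ∩ R, T.degree u := by
    calc 3 * (S ∩ R).card = ∑ _u ∈ S ∩ R, 3 := by rw [Finset.sum_const]; ring
      _ ≤ _ := Finset.sum_le_sum hred3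
  have hSb : (S ∩ Rᶜ).card ≤ ∑ u ∈ S ∩ Rᶜ, T.degree u := by
    calc (S ∩ Rᶜ).card = ∑ _u ∈ S ∩ Rᶜ, 1 := by simp
      _ ≤ _ := Finset.sum_le_sum fun u _ => hdeg1 u
  have hnpos : 1 ≤ n := Fintype.card_pos_iff.2 ⟨v⟩
  have hdn : d + 1 ≤ n := by
    calc d + 1 = (insert v S).card := hA.symm
      _ ≤ Finset.univ.card := Finset.card_le_card hAsub
      _ = n := Finset.card_univ
  omega
end

section
/- Let G be a finite simple graph that is r-regular and let (R,B) be a CNB-coloring of G. Then |R| = |B|, the number of edges with one endpoint in R and one endpoint in B equals (r+1)|V(G)|/4, and the number of edges with both endpoints in R equals the number of edges with both endpoints in B, both being equal to (r−1)|V(G)|/8. -/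
open scoped Classical
open Finset

/-- The set of edges of `G` with one endpoint in `S` and one endpoint in `T`. -/
noncomputable def SimpleGraph.edgesBetween {V : Type*} [Fintype V] (G : SimpleGraph V)
    (S T : Finset V) : Finset (Sym2 V) :=
  G.edgeFinset.filter (fun e => (∃ v ∈ e, v ∈ S) ∧ (∃ v ∈ e, v ∈ T))

namespace CNBAux

variable {V : Type*} [Fintype V]

/-- Restriction of a graph to pairs satisfying a symmetric predicate. -/
def rgraph (G : SimpleGraph V) (P : V → V → Prop) (hP : Symmetric P) : SimpleGraph V where
  Adj a b := G.Adj a b ∧ P a b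
  symm := ⟨fun _ _ h => ⟨h.1.symm, hP h.2⟩⟩
  loopless := ⟨fun a h => G.ne_of_adj h.1 rfl⟩

lemma rgraph_neighborFinset (G : SimpleGraph V) (P : V → V → Prop) (hP : Symmetric P) (v : V) :
    (rgraph G P hP).neighborFinset v = (G.neighborFinset v).filter (P v) := by
  ext u
  rw [SimpleGraph.mem_neighborFinset, Finset.mem_filter, SimpleGraph.mem_neighborFinset]
  rfl

lemma handshake (G : SimpleGraph V) (P : V → V → Prop) (hP : Symmetric P)
    [∀ v, DecidablePred (P v)] :
    ∑ v, ((G.neighborFinset v).filter (P v)).card = 2 * (rgraph G P hP).edgeFinset.card := by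
  rw [← SimpleGraph.sum_degrees_eq_twice_card_edges]
  refine Finset.sum_congr rfl fun v _ => ?_
  rw [SimpleGraph.degree, rgraph_neighborFinset]
  congr!

lemma within_eq (G : SimpleGraph V) (S : Finset V) :
    (rgraph G (fun a b => a ∈ S ∧ b ∈ S) (fun a b h => ⟨h.2, h.1⟩)).edgeFinset
      = G.edgesWithin S := by
  ext e
  induction e using Sym2.ind with
  | _ a b =>
    simp only [SimpleGraph.mem_edgeFinset, SimpleGraph.mem_edgeSet, SimpleGraph.edgesWithin,
      Finset.mem_filter, Sym2.mem_iff]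
    simp only [rgraph]
    constructor
    · rintro ⟨h1, h2, h3⟩
      exact ⟨h1, by rintro v (rfl|rfl) <;> assumption⟩
    · rintro ⟨h1, h2⟩
      exact ⟨h1, h2 a (Or.inl rfl), h2 b (Or.inr rfl)⟩

lemma between_eq (G : SimpleGraph V) (R : Finset V) :
    (rgraph G (fun a b => (a ∈ R ∧ b ∈ Rᶜ) ∨ (b ∈ R ∧ a ∈ Rᶜ))
      (fun a b h => h.symm)).edgeFinset = G.edgesBetween R Rᶜ := by
  ext e
  induction e using Sym2.ind with
  | _ a b =>
    simp only [SimpleGraph.mem_edgeFinset, SimpleGraph.mem_edgeSet, SimpleGraph.edgesBetween,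
      Finset.mem_filter, Sym2.mem_iff, Finset.mem_compl]
    simp only [rgraph]
    constructor
    · rintro ⟨h1, (⟨ha, hb⟩ | ⟨hb, ha⟩)⟩
      · exact ⟨h1, ⟨a, Or.inl rfl, ha⟩, ⟨b, Or.inr rfl, hb⟩⟩
      · exact ⟨h1, ⟨b, Or.inr rfl, hb⟩, ⟨a, Or.inl rfl, ha⟩⟩
    · rintro ⟨h1, ⟨x, hx, hxR⟩, ⟨y, hy, hyB⟩⟩
      refine ⟨h1, ?_⟩
      rcases hx with rfl | rfl <;> rcases hy with rfl | rfl <;> tauto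

/-- Double counting over closed neighborhoods. -/
lemma sum_closed (G : SimpleGraph V) {r : ℕ} (hreg : G.IsRegularOfDegree r) (R : Finset V) :
    ∑ v, ((insert v (G.neighborFinset v)) ∩ R).card = (r + 1) * R.card := by
  have h1 : ∀ v : V, ((insert v (G.neighborFinset v)) ∩ R).card
      = ∑ u ∈ R, if v ∈ insert u (G.neighborFinset u) then 1 else 0 := by
    intro v
    rw [Finset.inter_comm, ← Finset.filter_mem_eq_inter, Finset.card_filter]
    refine Finset.sum_congr rfl fun u _ => ?_
    congr 1
    simp only [Finset.mem_insert, SimpleGraph.mem_neighborFinset, eq_iff_iff]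
    rw [G.adj_comm]
    tauto
  simp_rw [h1]
  rw [Finset.sum_comm]
  have h2 : ∀ u : V, (∑ v : V, if v ∈ insert u (G.neighborFinset u) then 1 else 0) = r + 1 := by
    intro u
    rw [Finset.sum_ite_mem, Finset.univ_inter, Finset.sum_const, smul_eq_mul, mul_one,
      Finset.card_insert_of_notMem (by simp), G.card_neighborFinset_eq_degree, hreg u]
  rw [Finset.sum_congr rfl fun u _ => h2 u, Finset.sum_const, smul_eq_mul, mul_comm]

lemma inter_compl_card (s R : Finset V) : (s ∩ R).card + (s ∩ Rᶜ).card = s.card := by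
  rw [Finset.inter_comm s R, Finset.inter_comm s Rᶜ, ← Finset.filter_mem_eq_inter,
    ← Finset.filter_mem_eq_inter]
  have : R.filter (fun x => x ∈ s) = s.filter (fun x => x ∈ R) := by ext x; simp [and_comm]
  have h2 : Rᶜ.filter (fun x => x ∈ s) = s.filter (fun x => ¬ x ∈ R) := by ext x; simp [and_comm]
  rw [this, h2, Finset.card_filter_add_card_filter_not]

end CNBAux

/-- In a CNB-coloring of an `r`-regular graph `G`: `|R| = |B|`,
`|RB| = (r + 1)|V(G)| / 4`, and `|RR| = |BB| = (r − 1)|V(G)| / 8`. -/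
theorem cnb_regular_counts {V : Type*} [Fintype V] (G : SimpleGraph V) (r : ℕ)
    (hreg : G.IsRegularOfDegree r) (R : Finset V) (h : G.IsCNBColoring R) :
    R.card = Rᶜ.card ∧
    4 * (G.edgesBetween R Rᶜ).card = (r + 1) * Fintype.card V ∧
    (G.edgesWithin R).card = (G.edgesWithin Rᶜ).card ∧
    8 * (G.edgesWithin R).card = (r - 1) * Fintype.card V := by
  classical
  have hcard : ∀ v : V, (G.neighborFinset v ∩ R).card + (G.neighborFinset v ∩ Rᶜ).card = r := by
    intro v
    rw [CNBAux.inter_compl_card, G.card_neighborFinset_eq_degree, hreg v]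
  have hR : ∀ v ∈ R, 2 * (G.neighborFinset v ∩ R).card + 1 = r ∧
      2 * (G.neighborFinset v ∩ Rᶜ).card = r + 1 := by
    intro v hv
    have h1 := h v
    rw [Finset.insert_inter_of_mem hv,
      Finset.insert_inter_of_notMem (by simp [hv]),
      Finset.card_insert_of_notMem (by simp)] at h1
    have h2 := hcard v
    omega
  have hB : ∀ v ∈ Rᶜ, 2 * (G.neighborFinset v ∩ Rᶜ).card + 1 = r ∧
      2 * (G.neighborFinset v ∩ R).card = r + 1 := by
    intro v hv
    have h1 := h v
    rw [Finset.insert_inter_of_mem hv,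
      Finset.insert_inter_of_notMem (Finset.mem_compl.mp hv),
      Finset.card_insert_of_notMem (by simp)] at h1
    have h2 := hcard v
    omega
  -- |R| = |Rᶜ|
  have hsum1 := CNBAux.sum_closed G hreg R
  have hsum2 := CNBAux.sum_closed G hreg Rᶜ
  have heq : (r + 1) * R.card = (r + 1) * Rᶜ.card := by
    rw [← hsum1, ← hsum2]
    exact Finset.sum_congr rfl fun v _ => h v
  have hRBc : R.card = Rᶜ.card := Nat.eq_of_mul_eq_mul_left (by omega) heq
  have hn : Fintype.card V = R.card + Rᶜ.card := (Finset.card_add_card_compl R).symm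
  -- edges within a color class
  have hwithin : ∀ S : Finset V,
      ∑ v ∈ S, (G.neighborFinset v ∩ S).card = 2 * (G.edgesWithin S).card := by
    intro S
    have hw := CNBAux.handshake G (fun a b => a ∈ S ∧ b ∈ S) (fun a b hp => ⟨hp.2, hp.1⟩)
    rw [CNBAux.within_eq] at hw
    rw [← hw, ← Finset.sum_add_sum_compl S]
    have hz : ∑ v ∈ Sᶜ, ((G.neighborFinset v).filter (fun u => v ∈ S ∧ u ∈ S)).card = 0 := by
      refine Finset.sum_eq_zero fun v hv => ?_
      rw [Finset.card_eq_zero]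
      ext u
      simp only [Finset.mem_filter, Finset.notMem_empty, iff_false]
      exact fun hc => (Finset.mem_compl.mp hv) hc.2.1
    rw [hz, add_zero]
    refine Finset.sum_congr rfl fun v hv => ?_
    congr 1
    ext u
    simp [hv]
  have hRR : 4 * (G.edgesWithin R).card = (r - 1) * R.card := by
    have h2 : 2 * ∑ v ∈ R, (G.neighborFinset v ∩ R).card = ∑ v ∈ R, (r - 1) := by
      rw [Finset.mul_sum]
      exact Finset.sum_congr rfl fun v hv => by have := (hR v hv).1; omega
    rw [Finset.sum_const, smul_eq_mul] at h2
    have h3 : 4 * (G.edgesWithin R).card = 2 * (2 * (G.edgesWithin R).card) := by ring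
    rw [h3, ← hwithin R, h2, mul_comm]
  have hBB : 4 * (G.edgesWithin Rᶜ).card = (r - 1) * Rᶜ.card := by
    have h2 : 2 * ∑ v ∈ Rᶜ, (G.neighborFinset v ∩ Rᶜ).card = ∑ v ∈ Rᶜ, (r - 1) := by
      rw [Finset.mul_sum]
      exact Finset.sum_congr rfl fun v hv => by have := (hB v hv).1; omega
    rw [Finset.sum_const, smul_eq_mul] at h2
    have h3 : 4 * (G.edgesWithin Rᶜ).card = 2 * (2 * (G.edgesWithin Rᶜ).card) := by ring
    rw [h3, ← hwithin Rᶜ, h2, mul_comm]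
  -- edges between
  have hbet : ∑ v ∈ R, (G.neighborFinset v ∩ Rᶜ).card
      + ∑ v ∈ Rᶜ, (G.neighborFinset v ∩ R).card = 2 * (G.edgesBetween R Rᶜ).card := by
    have hw := CNBAux.handshake G (fun a b => (a ∈ R ∧ b ∈ Rᶜ) ∨ (b ∈ R ∧ a ∈ Rᶜ))
      (fun a b hp => hp.symm)
    rw [CNBAux.between_eq] at hw
    rw [← hw, ← Finset.sum_add_sum_compl R]
    congr 1
    · refine Finset.sum_congr rfl fun v hv => ?_
      congr 1
      ext u
      have hvc : v ∉ Rᶜ := by simp [hv]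
      simp only [Finset.mem_filter, Finset.mem_inter]
      constructor
      · rintro ⟨hn, hu⟩
        exact ⟨hn, Or.inl ⟨hv, hu⟩⟩
      · rintro ⟨hn, (⟨_, hu⟩ | ⟨_, hc⟩)⟩
        · exact ⟨hn, hu⟩
        · exact absurd hc hvc
    · refine Finset.sum_congr rfl fun v hv => ?_
      congr 1
      ext u
      have hvnr : v ∉ R := Finset.mem_compl.mp hv
      simp only [Finset.mem_filter, Finset.mem_inter]
      constructor
      · rintro ⟨hn, hu⟩
        exact ⟨hn, Or.inr ⟨hu, hv⟩⟩
      · rintro ⟨hn, (⟨hvr, _⟩ | ⟨hu, _⟩)⟩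
        · exact absurd hvr hvnr
        · exact ⟨hn, hu⟩
  have hRBedges : 4 * (G.edgesBetween R Rᶜ).card = (r + 1) * Fintype.card V := by
    have h2 : 2 * (∑ v ∈ R, (G.neighborFinset v ∩ Rᶜ).card
        + ∑ v ∈ Rᶜ, (G.neighborFinset v ∩ R).card)
        = (∑ v ∈ R, (r + 1)) + (∑ v ∈ Rᶜ, (r + 1)) := by
      rw [mul_add, Finset.mul_sum, Finset.mul_sum]
      congr 1
      · exact Finset.sum_congr rfl fun v hv => (hR v hv).2
      · exact Finset.sum_congr rfl fun v hv => (hB v hv).2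
    rw [Finset.sum_const, Finset.sum_const, smul_eq_mul, smul_eq_mul] at h2
    have h3 : 4 * (G.edgesBetween R Rᶜ).card
        = 2 * (2 * (G.edgesBetween R Rᶜ).card) := by ring
    rw [h3, ← hbet, h2, hn, ← add_mul, mul_comm]
  refine ⟨hRBc, hRBedges, ?_, ?_⟩
  · have : (r - 1) * R.card = (r - 1) * Rᶜ.card := by rw [hRBc]
    omega
  · have h8 : 8 * (G.edgesWithin R).card
        = 4 * (G.edgesWithin R).card + 4 * (G.edgesWithin Rᶜ).card := by
      have : (r - 1) * R.card = (r - 1) * Rᶜ.card := by rw [hRBc]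
      omega
    rw [h8, hRR, hBB, hn, mul_add]
end

section
/- If G is a finite simple graph that is r-regular and admits a CNB-coloring, then the number of vertices of G is congruent to 0 modulo 4, or r is congruent to 1 modulo 4. -/
open scoped Classical

/-- If an `r`-regular graph admits a CNB-coloring, then `|V| ≡ 0 (mod 4)` or `r ≡ 1 (mod 4)`. -/
theorem cnbc_regular_mod_four {V : Type*} [Fintype V] (G : SimpleGraph V) (r : ℕ)
    (hreg : G.IsRegularOfDegree r) (h : ∃ R : Finset V, G.IsCNBColoring R) :
    Fintype.card V % 4 = 0 ∨ r % 4 = 1 := by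
  classical
  obtain ⟨R, hR⟩ := h
  rcases isEmpty_or_nonempty V with hV | hV
  · left; simp [Fintype.card_eq_zero]
  set N : V → Finset V := fun v => insert v (G.neighborFinset v) with hN
  have hclosed : ∀ v, (N v).card = r + 1 := by
    intro v
    rw [hN]
    rw [Finset.card_insert_of_notMem (G.notMem_neighborFinset_self v),
      G.card_neighborFinset_eq_degree, hreg v]
  have hmemN : ∀ u v : V, u ∈ N v ↔ v ∈ N u := by
    intro u v
    simp only [hN, Finset.mem_insert, SimpleGraph.mem_neighborFinset]
    constructor
    · rintro (h | h); exacts [Or.inl h.symm, Or.inr h.symm]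
    · rintro (h | h); exacts [Or.inl h.symm, Or.inr h.symm]
  have hsplit : ∀ v, 2 * (N v ∩ R).card = r + 1 := by
    intro v
    have hdisj : Disjoint (N v ∩ R) (N v ∩ Rᶜ) :=
      Finset.disjoint_left.2 (by
        intro a ha hb
        exact (Finset.mem_compl.1 (Finset.mem_inter.1 hb).2) (Finset.mem_inter.1 ha).2)
    have hunion : (N v ∩ R) ∪ (N v ∩ Rᶜ) = N v := by
      rw [← Finset.inter_union_distrib_left, Finset.union_compl, Finset.inter_univ]
    have h1 : (N v ∩ R).card + (N v ∩ Rᶜ).card = r + 1 := by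
      rw [← Finset.card_union_of_disjoint hdisj, hunion, hclosed]
    have hRv : (N v ∩ R).card = (N v ∩ Rᶜ).card := hR v
    omega
  obtain ⟨v₀⟩ := hV
  obtain ⟨k, hk⟩ : ∃ k, r + 1 = 2 * k := ⟨(N v₀ ∩ R).card, (hsplit v₀).symm⟩
  have hcardk : ∀ v, (N v ∩ R).card = k := fun v => by have := hsplit v; omega
  have hkpos : 0 < k := by omega
  have hdc : Fintype.card V * k = R.card * (r + 1) := by
    have h1 : ∀ v, (N v ∩ R).card = ∑ u ∈ R, if u ∈ N v then 1 else 0 := by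
      intro v
      rw [← Finset.card_filter]
      congr 1
      ext u
      simp [Finset.mem_inter, Finset.mem_filter, and_comm]
    calc Fintype.card V * k = ∑ v : V, (N v ∩ R).card := by
          simp [hcardk, Finset.sum_const, Finset.card_univ, mul_comm]
      _ = ∑ v : V, ∑ u ∈ R, if u ∈ N v then 1 else 0 := by
          exact Finset.sum_congr rfl fun v _ => h1 v
      _ = ∑ u ∈ R, ∑ v : V, if u ∈ N v then 1 else 0 := Finset.sum_comm
      _ = ∑ u ∈ R, ∑ v : V, if v ∈ N u then 1 else 0 := by
          refine Finset.sum_congr rfl fun u _ => Finset.sum_congr rfl fun v _ => ?_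
          exact if_congr (hmemN u v) rfl rfl
      _ = ∑ u ∈ R, (N u).card := by
          refine Finset.sum_congr rfl fun u _ => ?_
          rw [← Finset.card_filter]
          congr 1
          ext v
          simp
      _ = R.card * (r + 1) := by simp [hclosed, Finset.sum_const, mul_comm]
  have hn2 : Fintype.card V = 2 * R.card := by
    have hmul : Fintype.card V * k = (2 * R.card) * k := by
      rw [hdc, hk]; ring
    exact Nat.eq_of_mul_eq_mul_right hkpos hmul
  let G' : SimpleGraph V :=
    { Adj := fun u v => G.Adj u v ∧ u ∈ R ∧ v ∈ R
      symm := ⟨fun u v h => ⟨h.1.symm, h.2.2, h.2.1⟩⟩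
      loopless := ⟨fun u h => G.irrefl h.1⟩ }
  have hdeg : ∀ v ∈ R, G'.degree v = (G.neighborFinset v ∩ R).card := by
    intro v hv
    unfold SimpleGraph.degree
    congr 1
    ext u
    simp only [SimpleGraph.mem_neighborFinset, Finset.mem_inter]
    constructor
    · rintro ⟨ha, _, hu⟩; exact ⟨ha, hu⟩
    · rintro ⟨ha, hu⟩; exact ⟨ha, hv, hu⟩
  have hdeg0 : ∀ v ∉ R, G'.degree v = 0 := by
    intro v hv
    rw [SimpleGraph.degree, Finset.card_eq_zero]
    ext u
    simp only [SimpleGraph.mem_neighborFinset, Finset.notMem_empty, iff_false]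
    rintro ⟨_, hv', _⟩; exact hv hv'
  have heven : Even (∑ v ∈ R, (G.neighborFinset v ∩ R).card) := by
    have h2 := G'.sum_degrees_eq_twice_card_edges
    have hsum : ∑ v ∈ R, (G.neighborFinset v ∩ R).card = ∑ v : V, G'.degree v := by
      rw [← Finset.sum_subset (Finset.subset_univ R) (fun v _ hv => hdeg0 v hv)]
      exact Finset.sum_congr rfl fun v hv => (hdeg v hv).symm
    rw [hsum, h2]
    exact even_two_mul _
  have hopen : ∀ v ∈ R, (N v ∩ R).card = (G.neighborFinset v ∩ R).card + 1 := by
    intro v hv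
    have he : N v ∩ R = insert v (G.neighborFinset v ∩ R) := by
      rw [hN]; exact Finset.insert_inter_of_mem hv
    rw [he, Finset.card_insert_of_notMem]
    intro hmem
    exact G.notMem_neighborFinset_self v (Finset.mem_inter.1 hmem).1
  have hsumR : (∑ v ∈ R, (G.neighborFinset v ∩ R).card) + R.card = R.card * k := by
    calc (∑ v ∈ R, (G.neighborFinset v ∩ R).card) + R.card
        = ∑ v ∈ R, ((G.neighborFinset v ∩ R).card + 1) := by
          rw [Finset.sum_add_distrib, Finset.sum_const, smul_eq_mul, mul_one]
      _ = ∑ v ∈ R, (N v ∩ R).card := Finset.sum_congr rfl fun v hv => (hopen v hv).symm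
      _ = R.card * k := by simp [hcardk, Finset.sum_const, mul_comm]
  rcases Nat.even_or_odd k with hke | hko
  · left
    obtain ⟨j, hj⟩ := hke
    obtain ⟨E, hE⟩ := heven
    have h3 : E + E + R.card = R.card * (j + j) := by rw [← hj, ← hE]; exact hsumR
    have h4 : R.card * (j + j) = 2 * (R.card * j) := by ring
    rw [h4] at h3
    omega
  · right
    obtain ⟨j, hj⟩ := hko
    omega
end

section
/- Let n and s be even positive integers and let S = {d₁, d₂, …, d_s} with 1 < d₁ < d₂ < ⋯ < d_s < n/2 − 1. If exactly half of the elements d₁, …, d_s are even, then the circulant graph C_n(S) is an NBC graph; if, in addition, n ≡ 2 (mod 4), then the circulant graph C_n(S ∪ {n/2}) is a CNBC graph. -/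
open scoped Classical

/-- The circulant graph `C_n(S)` on `ZMod n`: distinct vertices `i` and `j` are adjacent iff
`i - j ≡ ±d (mod n)` for some `d ∈ S`. -/
def circulant (n : ℕ) (S : Finset ℕ) : SimpleGraph (ZMod n) :=
  SimpleGraph.fromRel (fun i j => ∃ d ∈ S, i - j = (d : ZMod n))

section
variable {n : ℕ} [NeZero n]
lemma nbhd_eq (T : Finset ℕ) (hT0 : ∀ d ∈ T, (d : ZMod n) ≠ 0) (v : ZMod n) :
    (circulant n T).neighborFinset v =
      T.image (fun d : ℕ => v + (d:ZMod n)) ∪ T.image (fun d : ℕ => v - (d:ZMod n)) := by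
  ext u
  rw [SimpleGraph.mem_neighborFinset]
  simp only [circulant, SimpleGraph.fromRel_adj, Finset.mem_union, Finset.mem_image]
  constructor
  · rintro ⟨hne, h | h⟩
    · obtain ⟨d, hd, he⟩ := h
      right; refine ⟨d, hd, ?_⟩; rw [← he]; ring
    · obtain ⟨d, hd, he⟩ := h
      left; refine ⟨d, hd, ?_⟩; rw [← he]; ring
  · rintro (⟨d, hd, he⟩ | ⟨d, hd, he⟩)
    · refine ⟨?_, Or.inr ⟨d, hd, by rw [← he]; ring⟩⟩
      intro h; rw [← he, left_eq_add] at h; exact hT0 d hd h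
    · refine ⟨?_, Or.inl ⟨d, hd, by rw [← he]; ring⟩⟩
      intro h; rw [← he, eq_comm, sub_eq_self] at h; exact hT0 d hd h
end

section
variable {n : ℕ} [NeZero n]

lemma natCast_ne_zero' {d : ℕ} (h0 : 0 < d) (h1 : d < n) : (d : ZMod n) ≠ 0 := by
  rw [Ne, ZMod.natCast_eq_zero_iff]
  intro h
  exact absurd (Nat.le_of_dvd h0 h) (by omega)

lemma inj_add (T : Finset ℕ) (hT1 : ∀ d ∈ T, d < n) (v : ZMod n) :
    Set.InjOn (fun d : ℕ => v + (d : ZMod n)) T := by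
  intro a ha b hb h
  have h' : (a : ZMod n) = b := by
    have := add_left_cancel (a := v) h
    simpa using this
  have := congrArg ZMod.val h'
  rwa [ZMod.val_natCast_of_lt (hT1 a ha), ZMod.val_natCast_of_lt (hT1 b hb)] at this

lemma inj_sub (T : Finset ℕ) (hT1 : ∀ d ∈ T, d < n) (v : ZMod n) :
    Set.InjOn (fun d : ℕ => v - (d : ZMod n)) T := by
  intro a ha b hb h
  have h' : (a : ZMod n) = b := by
    simp only at h
    have : (v:ZMod n) - a - (v - b) = 0 := by rw [h]; ring
    have h2 : (b : ZMod n) - a = 0 := by linear_combination this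
    linear_combination -h2
  have := congrArg ZMod.val h'
  rwa [ZMod.val_natCast_of_lt (hT1 a ha), ZMod.val_natCast_of_lt (hT1 b hb)] at this

lemma card_inter_image (T : Finset ℕ) (f : ℕ → ZMod n) (hf : Set.InjOn f T)
    (R : Finset (ZMod n)) :
    (T.image f ∩ R).card = (T.filter (fun d => f d ∈ R)).card := by
  classical
  have h1 : T.image f ∩ R = (T.filter (fun d => f d ∈ R)).image f := by
    ext u
    simp only [Finset.mem_inter, Finset.mem_image, Finset.mem_filter]
    constructor
    · rintro ⟨⟨d, hd, rfl⟩, hu⟩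
      exact ⟨d, ⟨hd, hu⟩, rfl⟩
    · rintro ⟨d, ⟨hd, hu⟩, rfl⟩
      exact ⟨⟨d, hd, rfl⟩, hu⟩
  rw [h1, Finset.card_image_of_injOn (hf.mono (by intro x hx; simp only [Finset.coe_filter, Set.mem_setOf_eq] at hx; exact hx.1))]

lemma AB_inter (hn2 : 2 ∣ n) (T : Finset ℕ) (hT1 : ∀ d ∈ T, 0 < d ∧ d ≤ n / 2) (v : ZMod n) :
    T.image (fun d : ℕ => v + (d : ZMod n)) ∩ T.image (fun d : ℕ => v - (d : ZMod n))
      = if n / 2 ∈ T then {v + ((n / 2 : ℕ) : ZMod n)} else ∅ := by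
  have hn0 : 0 < n := Nat.pos_of_ne_zero (NeZero.ne n)
  have hnn : n / 2 + n / 2 = n := by omega
  have hhalfzero : ((n / 2 : ℕ) : ZMod n) + ((n / 2 : ℕ) : ZMod n) = 0 := by
    rw [← Nat.cast_add, hnn, ZMod.natCast_self]
  ext u
  simp only [Finset.mem_inter, Finset.mem_image]
  constructor
  · rintro ⟨⟨d, hd, he⟩, ⟨d', hd', he'⟩⟩
    have hsum : ((d + d' : ℕ) : ZMod n) = 0 := by
      push_cast
      linear_combination he - he'
    rw [ZMod.natCast_eq_zero_iff] at hsum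
    have hd1 := hT1 d hd
    have hd1' := hT1 d' hd'
    have hle : d + d' ≤ n := by omega
    have hpos : 0 < d + d' := by omega
    have heq : d + d' = n := Nat.le_antisymm hle (Nat.le_of_dvd hpos hsum)
    have hdh : d = n / 2 := by omega
    rw [if_pos (hdh ▸ hd), Finset.mem_singleton, ← he, hdh]
  · intro hu
    split_ifs at hu with hmem
    · rw [Finset.mem_singleton] at hu
      subst hu
      exact ⟨⟨n / 2, hmem, rfl⟩, ⟨n / 2, hmem, by linear_combination -hhalfzero⟩⟩
    · simp at hu
end

section
variable {n : ℕ} [NeZero n]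

lemma card_nbhd (hn2 : 2 ∣ n) (T : Finset ℕ) (hT1 : ∀ d ∈ T, 0 < d ∧ d ≤ n / 2)
    (v : ZMod n) (a : ZMod 2) :
    ((circulant n T).neighborFinset v ∩
        Finset.univ.filter (fun u => ZMod.castHom hn2 (ZMod 2) u = a)).card
      + (if n / 2 ∈ T ∧ ((n / 2 : ℕ) : ZMod 2) = a - ZMod.castHom hn2 (ZMod 2) v then 1 else 0)
      = 2 * (T.filter (fun d => ((d : ℕ) : ZMod 2) = a - ZMod.castHom hn2 (ZMod 2) v)).card := by
  classical
  have hn0 : 0 < n := Nat.pos_of_ne_zero (NeZero.ne n)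
  set φ := ZMod.castHom hn2 (ZMod 2) with hφ
  set R := Finset.univ.filter (fun u => φ u = a) with hR
  set b := a - φ v with hb
  have hTlt : ∀ d ∈ T, d < n := fun d hd => by have := hT1 d hd; omega
  have hT0 : ∀ d ∈ T, (d : ZMod n) ≠ 0 := fun d hd =>
    natCast_ne_zero' (hT1 d hd).1 (hTlt d hd)
  have hmemR : ∀ u : ZMod n, u ∈ R ↔ φ u = a := by
    intro u; simp [hR]
  have hcastd : ∀ d : ℕ, φ ((d : ℕ) : ZMod n) = ((d : ℕ) : ZMod 2) := fun d => map_natCast φ d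
  have hz2 : ∀ x y c : ZMod 2, (x + y = c ↔ y = c - x) ∧ (x - y = c ↔ y = c - x) := by decide
  have hpredA : ∀ d ∈ T, (v + (d : ZMod n) ∈ R ↔ ((d : ℕ) : ZMod 2) = b) := by
    intro d _
    rw [hmemR, map_add, hcastd, hb]
    exact (hz2 (φ v) d a).1
  have hpredB : ∀ d ∈ T, (v - (d : ZMod n) ∈ R ↔ ((d : ℕ) : ZMod 2) = b) := by
    intro d _
    rw [hmemR, map_sub, hcastd, hb]
    exact (hz2 (φ v) d a).2
  rw [nbhd_eq T hT0 v]
  set A := T.image (fun d : ℕ => v + (d : ZMod n)) with hA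
  set B := T.image (fun d : ℕ => v - (d : ZMod n)) with hB
  have hdistrib : (A ∪ B) ∩ R = (A ∩ R) ∪ (B ∩ R) := Finset.union_inter_distrib_right ..
  have hABR : (A ∩ R) ∩ (B ∩ R) = (A ∩ B) ∩ R := by
    ext u; simp only [Finset.mem_inter]; tauto
  have hcardU := Finset.card_union_add_card_inter (A ∩ R) (B ∩ R)
  rw [hABR] at hcardU
  have hcA : (A ∩ R).card = (T.filter (fun d => ((d : ℕ) : ZMod 2) = b)).card := by
    rw [hA, card_inter_image T _ (inj_add T hTlt v) R, Finset.filter_congr hpredA]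
  have hcB : (B ∩ R).card = (T.filter (fun d => ((d : ℕ) : ZMod 2) = b)).card := by
    rw [hB, card_inter_image T _ (inj_sub T hTlt v) R, Finset.filter_congr hpredB]
  have hABcard : ((A ∩ B) ∩ R).card
      = if n / 2 ∈ T ∧ ((n / 2 : ℕ) : ZMod 2) = b then 1 else 0 := by
    rw [hA, hB, AB_inter hn2 T hT1 v]
    by_cases h1 : n / 2 ∈ T
    · rw [if_pos h1]
      by_cases h2 : ((n / 2 : ℕ) : ZMod 2) = b
      · rw [if_pos ⟨h1, h2⟩, Finset.singleton_inter_of_mem ((hpredA _ h1).mpr h2),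
          Finset.card_singleton]
      · rw [if_neg (fun h => h2 h.2),
          Finset.singleton_inter_of_notMem (fun h => h2 ((hpredA _ h1).mp h)),
          Finset.card_empty]
    · rw [if_neg h1, if_neg (fun h => h1 h.1)]
      simp
  rw [hdistrib, ← hABcard]
  omega

lemma two_mul_filter_card (S : Finset ℕ) (s : ℕ) (hcard : S.card = s)
    (hhalf : 2 * (S.filter (fun d => Even d)).card = s) (b : ZMod 2) :
    2 * (S.filter (fun d => ((d : ℕ) : ZMod 2) = b)).card = s := by
  classical
  have h0 : S.filter (fun d => ((d : ℕ) : ZMod 2) = 0) = S.filter (fun d => Even d) := by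
    apply Finset.filter_congr
    intro d _
    rw [ZMod.natCast_eq_zero_iff]
    constructor
    · rintro ⟨k, rfl⟩; exact ⟨k, by omega⟩
    · rintro ⟨k, rfl⟩; exact ⟨k, by omega⟩
  have h1 : S.filter (fun d => ((d : ℕ) : ZMod 2) = 1)
      = S.filter (fun d => ¬ ((d : ℕ) : ZMod 2) = 0) := by
    apply Finset.filter_congr
    intro d _
    have : ∀ x : ZMod 2, x = 1 ↔ ¬ x = 0 := by decide
    exact this _
  have hadd := Finset.card_filter_add_card_filter_not
    (s := S) (p := fun d => ((d : ℕ) : ZMod 2) = 0)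
  have hz01 : ∀ x : ZMod 2, x = 0 ∨ x = 1 := by decide
  rcases hz01 b with rfl | rfl
  · rw [h0]; exact hhalf
  · rw [h1]
    have h0c := congrArg Finset.card h0
    omega
end

lemma z2_ne_zero_iff : ∀ x : ZMod 2, ¬ x = 0 ↔ x = 1 := by decide

lemma nb_abstract {n : ℕ} [NeZero n] (hn2 : 2 ∣ n) (s : ℕ) (S : Finset ℕ) (hcard : S.card = s)
    (hrange : ∀ d ∈ S, 1 < d ∧ d < n / 2 - 1)
    (hhalf : 2 * (S.filter (fun d => Even d)).card = s)
    (v : ZMod n) (P Q : Finset (ZMod n))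
    (hP : ∀ u, u ∈ P ↔ ((circulant n S).Adj v u ∧ ZMod.castHom hn2 (ZMod 2) u = 0))
    (hQ : ∀ u, u ∈ Q ↔ ((circulant n S).Adj v u ∧ ¬ ZMod.castHom hn2 (ZMod 2) u = 0)) :
    P.card = Q.card := by
  classical
  have hn0 : 0 < n := Nat.pos_of_ne_zero (NeZero.ne n)
  have hPeq : P = (circulant n S).neighborFinset v ∩
      Finset.univ.filter (fun u : ZMod n => ZMod.castHom hn2 (ZMod 2) u = 0) := by
    ext u
    rw [hP, Finset.mem_inter, SimpleGraph.mem_neighborFinset]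
    simp only [Finset.mem_filter, Finset.mem_univ, true_and]
  have hQeq : Q = (circulant n S).neighborFinset v ∩
      Finset.univ.filter (fun u : ZMod n => ZMod.castHom hn2 (ZMod 2) u = 1) := by
    ext u
    rw [hQ, Finset.mem_inter, SimpleGraph.mem_neighborFinset]
    simp only [Finset.mem_filter, Finset.mem_univ, true_and]
    rw [z2_ne_zero_iff]
  have hT1 : ∀ d ∈ S, 0 < d ∧ d ≤ n / 2 := fun d hd => by have := hrange d hd; omega
  have key : ∀ a : ZMod 2, ((circulant n S).neighborFinset v ∩
      Finset.univ.filter (fun u => ZMod.castHom hn2 (ZMod 2) u = a)).card = s := by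
    intro a
    have h1 := card_nbhd hn2 S hT1 v a
    have h3 := two_mul_filter_card S s hcard hhalf (a - ZMod.castHom hn2 (ZMod 2) v)
    rw [if_neg (fun h => by have := hrange _ h.1; omega)] at h1
    omega
  rw [hPeq, hQeq, key 0, key 1]

lemma cnb_abstract {n : ℕ} [NeZero n] (hn2 : 2 ∣ n) (h4 : n % 4 = 2) (s : ℕ) (S : Finset ℕ)
    (hcard : S.card = s) (hrange : ∀ d ∈ S, 1 < d ∧ d < n / 2 - 1)
    (hhalf : 2 * (S.filter (fun d => Even d)).card = s)
    (v : ZMod n) (P Q : Finset (ZMod n))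
    (hP : ∀ u, u ∈ P ↔ ((u = v ∨ (circulant n (S ∪ {n / 2})).Adj v u) ∧
      ZMod.castHom hn2 (ZMod 2) u = 0))
    (hQ : ∀ u, u ∈ Q ↔ ((u = v ∨ (circulant n (S ∪ {n / 2})).Adj v u) ∧
      ¬ ZMod.castHom hn2 (ZMod 2) u = 0)) :
    P.card = Q.card := by
  classical
  have hn0 : 0 < n := Nat.pos_of_ne_zero (NeZero.ne n)
  set φ := ZMod.castHom hn2 (ZMod 2) with hφ
  set T := S ∪ {n / 2} with hT
  have hPeq : P = insert v ((circulant n T).neighborFinset v) ∩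
      Finset.univ.filter (fun u : ZMod n => φ u = 0) := by
    ext u
    rw [hP, Finset.mem_inter, Finset.mem_insert, SimpleGraph.mem_neighborFinset]
    simp only [Finset.mem_filter, Finset.mem_univ, true_and]
  have hQeq : Q = insert v ((circulant n T).neighborFinset v) ∩
      Finset.univ.filter (fun u : ZMod n => φ u = 1) := by
    ext u
    rw [hQ, Finset.mem_inter, Finset.mem_insert, SimpleGraph.mem_neighborFinset]
    simp only [Finset.mem_filter, Finset.mem_univ, true_and]
    rw [z2_ne_zero_iff]
  have hz01 : ∀ x : ZMod 2, x = 0 ∨ x = 1 := by decide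
  have hhalfmem : n / 2 ∈ T := by simp [hT]
  have hnotS : n / 2 ∉ S := fun h => by have := hrange _ h; omega
  have hT1 : ∀ d ∈ T, 0 < d ∧ d ≤ n / 2 := by
    intro d hd
    rw [hT, Finset.mem_union, Finset.mem_singleton] at hd
    rcases hd with hd | rfl
    · have := hrange d hd; omega
    · omega
  have hodd : ((n / 2 : ℕ) : ZMod 2) = 1 := by
    have h0 : ¬ ((n / 2 : ℕ) : ZMod 2) = 0 := by
      rw [ZMod.natCast_eq_zero_iff]
      omega
    rcases hz01 ((n / 2 : ℕ) : ZMod 2) with h | h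
    · exact absurd h h0
    · exact h
  have htcard : ∀ b : ZMod 2, (T.filter (fun d => ((d : ℕ) : ZMod 2) = b)).card
      = (S.filter (fun d => ((d : ℕ) : ZMod 2) = b)).card
        + (if (1 : ZMod 2) = b then 1 else 0) := by
    intro b
    have hdisj : Disjoint (S.filter (fun d => ((d : ℕ) : ZMod 2) = b))
        (({n / 2} : Finset ℕ).filter (fun d => ((d : ℕ) : ZMod 2) = b)) := by
      rw [Finset.disjoint_left]
      intro x hx hx2
      rw [Finset.mem_filter, Finset.mem_singleton] at hx2
      rw [Finset.mem_filter] at hx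
      exact hnotS (hx2.1 ▸ hx.1)
    rw [hT, Finset.filter_union, Finset.card_union_of_disjoint hdisj,
      Finset.filter_singleton, hodd]
    congr 1
    split_ifs with hc
    · exact Finset.card_singleton _
    · exact Finset.card_empty
  have hvnot := SimpleGraph.notMem_neighborFinset_self (circulant n T) v
  have hclosed : ∀ a : ZMod 2,
      (insert v ((circulant n T).neighborFinset v) ∩
          Finset.univ.filter (fun u => φ u = a)).card
        = ((circulant n T).neighborFinset v ∩ Finset.univ.filter (fun u => φ u = a)).card
          + (if φ v = a then 1 else 0) := by
    intro a
    by_cases hva : φ v = a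
    · rw [Finset.insert_inter_of_mem (by simp [hva]), if_pos hva,
        Finset.card_insert_of_notMem (fun h => hvnot (Finset.mem_inter.mp h).1)]
    · rw [Finset.insert_inter_of_notMem (by simp [hva]), if_neg hva, add_zero]
  have main : ∀ a : ZMod 2,
      (insert v ((circulant n T).neighborFinset v) ∩
          Finset.univ.filter (fun u => φ u = a)).card = s + 1 := by
    intro a
    have h1 := card_nbhd hn2 T hT1 v a
    rw [← hφ] at h1
    have h2 := htcard (a - φ v)
    have h3 := two_mul_filter_card S s hcard hhalf (a - φ v)
    rw [hclosed a]
    rw [hodd] at h1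
    by_cases hva : φ v = a
    · have e1 : ¬ ((1 : ZMod 2) = a - φ v) := by
        rw [hva]; simp
      rw [if_neg (fun h => e1 h.2), add_zero] at h1
      rw [if_neg e1, add_zero] at h2
      rw [if_pos hva]
      omega
    · have e1 : (1 : ZMod 2) = a - φ v := by
        have h5 : ∀ x y : ZMod 2, ¬ x = y → (1 : ZMod 2) = y - x := by decide
        exact h5 _ _ hva
      rw [if_pos ⟨hhalfmem, e1⟩] at h1
      rw [if_pos e1] at h2
      rw [if_neg hva, add_zero]
      omega
  rw [hPeq, hQeq, main 0, main 1]


/-- Let `n` and `s` be even positive integers and `S` a set of `s` integers strictly between `1`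
and `n/2 - 1`, exactly half of which are even. Then `C_n(S)` is an NBC graph, and if moreover
`n ≡ 2 (mod 4)` then `C_n(S ∪ {n/2})` is a CNBC graph. -/
theorem circulant_nbc_and_cnbc (n s : ℕ) [NeZero n] (hn : Even n) (hs : Even s) (hs0 : 0 < s)
    (S : Finset ℕ) (hcard : S.card = s)
    (hrange : ∀ d ∈ S, 1 < d ∧ d < n / 2 - 1)
    (hhalf : 2 * (S.filter (fun d => Even d)).card = s) :
    (∃ R : Finset (ZMod n), (circulant n S).IsNBColoring R) ∧
    (n % 4 = 2 → ∃ R : Finset (ZMod n), (circulant n (S ∪ {n / 2})).IsCNBColoring R) := by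
  classical
  obtain ⟨m, hm⟩ := hn
  have hn2 : 2 ∣ n := ⟨m, by omega⟩
  constructor
  · refine ⟨Finset.univ.filter (fun u : ZMod n => ZMod.castHom hn2 (ZMod 2) u = 0), ?_⟩
    intro v
    exact nb_abstract hn2 s S hcard hrange hhalf v _ _
      (fun u => by simp only [Finset.mem_inter, SimpleGraph.mem_neighborFinset,
        Finset.mem_filter, Finset.mem_univ, true_and])
      (fun u => by simp only [Finset.mem_inter, SimpleGraph.mem_neighborFinset,
        Finset.mem_compl, Finset.mem_filter, Finset.mem_univ, true_and])
  · intro h4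
    refine ⟨Finset.univ.filter (fun u : ZMod n => ZMod.castHom hn2 (ZMod 2) u = 0), ?_⟩
    intro v
    exact cnb_abstract hn2 h4 s S hcard hrange hhalf v _ _
      (fun u => by simp only [Finset.mem_inter, Finset.mem_insert,
        SimpleGraph.mem_neighborFinset, Finset.mem_filter, Finset.mem_univ, true_and])
      (fun u => by simp only [Finset.mem_inter, Finset.mem_insert,
        SimpleGraph.mem_neighborFinset, Finset.mem_compl, Finset.mem_filter,
        Finset.mem_univ, true_and])
end

section
/- Let n ≡ 0 (mod 4) and let S = {d₁, d₂, …, d_s} with s even and 1 ≤ d₁ < d₂ < ⋯ < d_s < n/2, such that for every d, d ∈ S if and only if n/2 − d ∈ S. Then the circulant graphs C_n(S) and C_n(S ∪ {n/4}) are NBC graphs, and the circulant graphs C_n(S ∪ {n/2}) and C_n(S ∪ {n/4, n/2}) are CNBC graphs. -/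
open scoped Classical

section Aux
variable {n : ℕ} [NeZero n]

lemma aux_swap (hm : n / 2 + n / 2 = n) (u : ZMod n) :
    (u + (n / 2 : ℕ)).val < n / 2 ↔ ¬ u.val < n / 2 := by
  have h0 : n ≠ 0 := NeZero.ne n
  have hn2 : (n / 2 : ℕ) < n := by omega
  have hval : u.val < n := ZMod.val_lt u
  rw [ZMod.val_add, ZMod.val_cast_of_lt hn2]
  by_cases hk : u.val < n / 2
  · rw [Nat.mod_eq_of_lt (by omega)]; omega
  · rw [Nat.mod_eq_sub_mod (by omega), Nat.mod_eq_of_lt (by omega)]; omega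

lemma aux_count (M : ZMod n) (hMM : M + M = 0)
    (R A : Finset (ZMod n))
    (hR : ∀ u : ZMod n, u + M ∈ R ↔ u ∉ R)
    (hA : ∀ u : ZMod n, u ∈ A → u + M ∈ A) :
    (A ∩ R).card = (A ∩ Rᶜ).card := by
  have hinv : ∀ u : ZMod n, u + M + M = u := by
    intro u; rw [add_assoc, hMM, add_zero]
  apply Finset.card_bij' (fun u _ => u + M) (fun u _ => u + M)
  · intro a ha
    rw [Finset.mem_inter] at ha ⊢
    rw [Finset.mem_compl]
    exact ⟨hA a ha.1, fun h => ((hR a).mp h) ha.2⟩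
  · intro a ha
    rw [Finset.mem_inter, Finset.mem_compl] at ha
    rw [Finset.mem_inter]
    exact ⟨hA a ha.1, (hR a).mpr ha.2⟩
  · intro a _; exact hinv a
  · intro a _; exact hinv a

lemma aux_cast_ne (hm : n / 2 + n / 2 = n) {d : ℕ} (hd : d < n / 2) :
    (d : ZMod n) ≠ ((n / 2 : ℕ) : ZMod n) := by
  have h0 : n ≠ 0 := NeZero.ne n
  intro h
  have h1 : ((d : ℕ) : ZMod n).val = d := ZMod.val_cast_of_lt (by omega)
  have h2 : (((n / 2 : ℕ)) : ZMod n).val = n / 2 := ZMod.val_cast_of_lt (by omega)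
  rw [h] at h1
  omega

/-- Core relation-invariance lemma. -/
lemma aux_rel (hm : n / 2 + n / 2 = n) (T : Finset ℕ)
    (hT : ∀ d ∈ T, 1 ≤ d ∧ d < n / 2 ∧ n / 2 - d ∈ T)
    {x : ZMod n} (hx : x ≠ 0) (hd : ∃ d ∈ T, x = (d : ZMod n) ∨ -x = (d : ZMod n)) :
    (x + ((n / 2 : ℕ) : ZMod n) ≠ 0) ∧
      ∃ d ∈ T, x + ((n / 2 : ℕ) : ZMod n) = (d : ZMod n) ∨
        -(x + ((n / 2 : ℕ) : ZMod n)) = (d : ZMod n) := by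
  have hMM : ((n / 2 : ℕ) : ZMod n) + ((n / 2 : ℕ) : ZMod n) = 0 := by
    rw [← Nat.cast_add, hm, ZMod.natCast_self]
  obtain ⟨d, hdT, hcase⟩ := hd
  obtain ⟨h1, h2, heT⟩ := hT d hdT
  have hce : ((n / 2 - d : ℕ) : ZMod n) = ((n / 2 : ℕ) : ZMod n) - (d : ZMod n) := by
    rw [Nat.cast_sub (le_of_lt h2)]
  constructor
  · intro h0
    have hxM : x = ((n / 2 : ℕ) : ZMod n) := by linear_combination h0 - hMM
    rcases hcase with h | h
    · exact aux_cast_ne hm h2 (by rw [← h, hxM])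
    · exact aux_cast_ne hm h2 (by rw [← h, hxM]; linear_combination -hMM)
  · refine ⟨n / 2 - d, heT, ?_⟩
    rcases hcase with h | h
    · right; rw [hce]; linear_combination -h - hMM
    · left; rw [hce]; linear_combination -h

lemma aux_open (hm : n / 2 + n / 2 = n) (T : Finset ℕ)
    (hT : ∀ d ∈ T, 1 ≤ d ∧ d < n / 2 ∧ n / 2 - d ∈ T)
    (v u : ZMod n) (h : u ∈ (circulant n T).neighborFinset v) :
    u + ((n / 2 : ℕ) : ZMod n) ∈ (circulant n T).neighborFinset v := by
  rw [SimpleGraph.mem_neighborFinset] at h ⊢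
  rw [circulant, SimpleGraph.fromRel_adj] at h ⊢
  obtain ⟨hne, hcase⟩ := h
  have hx : u - v ≠ 0 := fun h0 => hne (by linear_combination -h0)
  have hd : ∃ d ∈ T, u - v = (d : ZMod n) ∨ -(u - v) = (d : ZMod n) := by
    rcases hcase with ⟨d, hdT, hvu⟩ | ⟨d, hdT, huv⟩
    · exact ⟨d, hdT, Or.inr (by linear_combination hvu)⟩
    · exact ⟨d, hdT, Or.inl huv⟩
  obtain ⟨hne', d, hdT, hcase'⟩ := aux_rel hm T hT hx hd
  refine ⟨fun h0 => hne' (by linear_combination -h0), ?_⟩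
  rcases hcase' with h | h
  · exact Or.inr ⟨d, hdT, by linear_combination h⟩
  · exact Or.inl ⟨d, hdT, by linear_combination h⟩

lemma aux_closed (hm : n / 2 + n / 2 = n) (T : Finset ℕ)
    (hT : ∀ d ∈ T, 1 ≤ d ∧ d < n / 2 ∧ n / 2 - d ∈ T)
    (v u : ZMod n)
    (h : u ∈ insert v ((circulant n (T ∪ {n / 2})).neighborFinset v)) :
    u + ((n / 2 : ℕ) : ZMod n) ∈ insert v ((circulant n (T ∪ {n / 2})).neighborFinset v) := by
  have h0 : n ≠ 0 := NeZero.ne n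
  have hMne : ((n / 2 : ℕ) : ZMod n) ≠ 0 := by
    intro h'
    have := ZMod.val_cast_of_lt (show n / 2 < n by omega) (a := n / 2)
    rw [h'] at this
    simp [ZMod.val_zero] at this
    omega
  have hMM : ((n / 2 : ℕ) : ZMod n) + ((n / 2 : ℕ) : ZMod n) = 0 := by
    rw [← Nat.cast_add, hm, ZMod.natCast_self]
  rw [Finset.mem_insert] at h ⊢
  rcases h with rfl | h
  · right
    rw [SimpleGraph.mem_neighborFinset, circulant, SimpleGraph.fromRel_adj]
    refine ⟨fun h' => hMne (by linear_combination -h'), Or.inr ⟨n / 2, ?_, by ring⟩⟩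
    exact Finset.mem_union_right _ (Finset.mem_singleton_self _)
  · rw [SimpleGraph.mem_neighborFinset, circulant, SimpleGraph.fromRel_adj] at h
    obtain ⟨hne, hcase⟩ := h
    have hx : u - v ≠ 0 := fun h0 => hne (by linear_combination -h0)
    have hd : ∃ d ∈ T ∪ {n / 2}, u - v = (d : ZMod n) ∨ -(u - v) = (d : ZMod n) := by
      rcases hcase with ⟨d, hdT, hvu⟩ | ⟨d, hdT, huv⟩
      · exact ⟨d, hdT, Or.inr (by linear_combination hvu)⟩
      · exact ⟨d, hdT, Or.inl huv⟩
    obtain ⟨d, hdT, hc⟩ := hd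
    rcases Finset.mem_union.mp hdT with hdT' | hhalf
    · -- d ∈ T : same as the open case
      right
      rw [SimpleGraph.mem_neighborFinset, circulant, SimpleGraph.fromRel_adj]
      obtain ⟨hne', d', hdT'', hcase'⟩ :=
        aux_rel hm T hT hx ⟨d, hdT', hc⟩
      refine ⟨fun h0 => hne' (by linear_combination -h0), ?_⟩
      rcases hcase' with h | h
      · exact Or.inr ⟨d', Finset.mem_union_left _ hdT'', by linear_combination h⟩
      · exact Or.inl ⟨d', Finset.mem_union_left _ hdT'', by linear_combination h⟩
    · -- d = n/2 : then u = v + M, so u + M = v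
      left
      have hd2 : d = n / 2 := Finset.mem_singleton.mp hhalf
      subst hd2
      rcases hc with h | h
      · linear_combination h + hMM
      · linear_combination -h

end Aux

/-- Let `n ≡ 0 (mod 4)` and let `S` be a set of evenly many integers `d` with `1 ≤ d < n/2`,
such that `d ∈ S` iff `n/2 − d ∈ S`. Then `C_n(S)` and `C_n(S ∪ {n/4})` are NBC graphs, and
`C_n(S ∪ {n/2})` and `C_n(S ∪ {n/4, n/2})` are CNBC graphs. -/
theorem circulant_mod_four_nbc_and_cnbc (n : ℕ) [NeZero n] (hn : n % 4 = 0)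
    (S : Finset ℕ) (hs : Even S.card)
    (hrange : ∀ d ∈ S, 1 ≤ d ∧ d < n / 2)
    (hsym : ∀ d : ℕ, 1 ≤ d → d < n / 2 → (d ∈ S ↔ n / 2 - d ∈ S)) :
    (∃ R : Finset (ZMod n), (circulant n S).IsNBColoring R) ∧
    (∃ R : Finset (ZMod n), (circulant n (S ∪ {n / 4})).IsNBColoring R) ∧
    (∃ R : Finset (ZMod n), (circulant n (S ∪ {n / 2})).IsCNBColoring R) ∧
    (∃ R : Finset (ZMod n), (circulant n (S ∪ {n / 4, n / 2})).IsCNBColoring R) := by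
  have h0 : n ≠ 0 := NeZero.ne n
  have hm : n / 2 + n / 2 = n := by omega
  have hn4 : 4 ≤ n := by omega
  set R : Finset (ZMod n) := Finset.univ.filter (fun v => v.val < n / 2) with hRdef
  have hR : ∀ u : ZMod n, u + ((n / 2 : ℕ) : ZMod n) ∈ R ↔ u ∉ R := by
    intro u
    simp only [hRdef, Finset.mem_filter, Finset.mem_univ, true_and]
    exact aux_swap hm u
  have hMM : ((n / 2 : ℕ) : ZMod n) + ((n / 2 : ℕ) : ZMod n) = 0 := by
    rw [← Nat.cast_add, hm, ZMod.natCast_self]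
  have hTS : ∀ d ∈ S, 1 ≤ d ∧ d < n / 2 ∧ n / 2 - d ∈ S := by
    intro d hd
    obtain ⟨h1, h2⟩ := hrange d hd
    exact ⟨h1, h2, (hsym d h1 h2).mp hd⟩
  have hTS4 : ∀ d ∈ S ∪ {n / 4}, 1 ≤ d ∧ d < n / 2 ∧ n / 2 - d ∈ S ∪ {n / 4} := by
    intro d hd
    rcases Finset.mem_union.mp hd with h | h
    · exact ⟨(hTS d h).1, (hTS d h).2.1, Finset.mem_union_left _ (hTS d h).2.2⟩
    · have hq : d = n / 4 := Finset.mem_singleton.mp h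
      subst hq
      refine ⟨by omega, by omega, ?_⟩
      have hq2 : n / 2 - n / 4 = n / 4 := by omega
      rw [hq2]
      exact Finset.mem_union_right _ (Finset.mem_singleton_self _)
  refine ⟨⟨R, ?_⟩, ⟨R, ?_⟩, ⟨R, ?_⟩, ⟨R, ?_⟩⟩
  · intro v
    convert aux_count _ hMM R _ hR (fun u hu => aux_open hm S hTS v u hu) using 2 <;> · ext x; simp
  · intro v
    convert aux_count _ hMM R _ hR (fun u hu => aux_open hm (S ∪ {n / 4}) hTS4 v u hu) using 2 <;> · ext x; simp
  · intro v
    convert aux_count _ hMM R _ hR (fun u hu => aux_closed hm S hTS v u hu) using 2 <;> · ext x; simp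
  · have hset : S ∪ {n / 4, n / 2} = (S ∪ {n / 4}) ∪ {n / 2} := by
      ext x
      simp only [Finset.mem_union, Finset.mem_insert, Finset.mem_singleton]
      tauto
    rw [hset]
    intro v
    convert aux_count _ hMM R _ hR (fun u hu => aux_closed hm (S ∪ {n / 4}) hTS4 v u hu) using 2 <;> · ext x; simp
end

section
/- Let n be an even positive integer and let d satisfy 1 ≤ d ≤ n/2 − 1 with d relatively prime to n/2. Then the cubic circulant graph C_n(d, n/2) is a CNBC graph if and only if n ≡ 0 (mod 4). -/
open scoped Classical

private lemma castif (p : Prop) [Decidable p] :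
    (if p then (1:ℤ) else 0) = ((if p then (1:ℕ) else 0) : ℤ) := by split_ifs <;> simp

private lemma flip_iter {n : ℕ} (F : ZMod n → ZMod 2) (a : ZMod n)
    (h : ∀ v, F (v + a) = F v + 1) : ∀ (k : ℕ) (v : ZMod n), F (v + k • a) = F v + k := by
  intro k
  induction k with
  | zero => simp
  | succ k ih =>
      intro v
      have e : v + (k+1) • a = (v + k • a) + a := by rw [succ_nsmul]; ring
      rw [e, h, ih]; push_cast; ring

private lemma fix_iter {n : ℕ} (F : ZMod n → ZMod 2) (a : ZMod n)
    (h : ∀ v, F (v + a) = F v) : ∀ (k : ℕ) (v : ZMod n), F (v + k • a) = F v := by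
  intro k
  induction k with
  | zero => simp
  | succ k ih =>
      intro v
      have e : v + (k+1) • a = (v + k • a) + a := by rw [succ_nsmul]; ring
      rw [e, h, ih]

private lemma sign_iter {n : ℕ} (g : ZMod n → ℤ) (c : ZMod n)
    (h : ∀ v, g (v + c) = - g v) : ∀ (k : ℕ) (v : ZMod n), g (v + k • c) = (-1)^k * g v := by
  intro k
  induction k with
  | zero => simp
  | succ k ih =>
      intro v
      have e : v + (k+1) • c = (v + k • c) + c := by rw [succ_nsmul]; ring
      rw [e, h, ih]; ring

/-- For `n` even and `1 ≤ d ≤ n/2 − 1` with `d` relatively prime to `n/2`, the cubic circulant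
`C_n(d, n/2)` is a CNBC graph iff `n ≡ 0 (mod 4)`. -/
theorem cubic_circulant_cnbc_iff (n d : ℕ) [NeZero n] (hn : Even n)
    (hd1 : 1 ≤ d) (hd2 : d ≤ n / 2 - 1) (hcop : Nat.Coprime d (n / 2)) :
    (∃ R : Finset (ZMod n), (circulant n {d, n / 2}).IsCNBColoring R) ↔ n % 4 = 0 := by
  obtain ⟨m, hm⟩ : ∃ m, n / 2 = m := ⟨_, rfl⟩
  rw [hm] at hd2 hcop ⊢
  obtain ⟨t, ht⟩ := hn
  have hm2 : 2 ≤ m := by omega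
  have hnm : n = 2 * m := by omega
  have hdm : d < m := by omega
  set a : ZMod n := (d : ZMod n) with ha
  set b : ZMod n := (m : ZMod n) with hb
  clear_value a b
  have hcast : ∀ k : ℕ, ((k : ZMod n) = 0 ↔ n ∣ k) := fun k => ZMod.natCast_eq_zero_iff k n
  have hmmn : m + m = n := by omega
  have hb2 : b + b = 0 := by
    rw [hb, ← Nat.cast_add, hmmn, ZMod.natCast_self]
  have ha0 : a ≠ 0 := by
    rw [ha, Ne, hcast]; intro h; have := Nat.le_of_dvd (by omega) h; omega
  have hb0 : b ≠ 0 := by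
    rw [hb, Ne, hcast]; intro h; have := Nat.le_of_dvd (by omega) h; omega
  have haa : a + a ≠ 0 := by
    rw [ha, ← Nat.cast_add, Ne, hcast]; intro h; have := Nat.le_of_dvd (by omega) h; omega
  have hanb : a + b ≠ 0 := by
    rw [ha, hb, ← Nat.cast_add, Ne, hcast]; intro h; have := Nat.le_of_dvd (by omega) h; omega
  have hab : a ≠ b := by
    rw [ha, hb, Ne, ZMod.natCast_eq_natCast_iff]
    intro h
    have h' : d % n = m % n := h
    rw [Nat.mod_eq_of_lt (by omega), Nat.mod_eq_of_lt (by omega)] at h'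
    omega
  -- adjacency characterization
  have hadj : ∀ v j : ZMod n, (circulant n {d, m}).Adj v j ↔
      (j = v + a ∨ j = v - a ∨ j = v + b) := by
    intro v j
    simp only [circulant, SimpleGraph.fromRel_adj, Finset.mem_insert, Finset.mem_singleton]
    constructor
    · rintro ⟨hne, h | h⟩
      · obtain ⟨e, he, heq⟩ := h
        rcases he with rfl | rfl
        · right; left; linear_combination -heq + ha
        · right; right; linear_combination -heq + hb - hb2
      · obtain ⟨e, he, heq⟩ := h
        rcases he with rfl | rfl
        · left; linear_combination heq - ha
        · right; right; linear_combination heq - hb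
    · rintro (rfl | rfl | rfl)
      · exact ⟨fun h => ha0 (by linear_combination -h), Or.inr ⟨d, Or.inl rfl, by linear_combination ha⟩⟩
      · exact ⟨fun h => ha0 (by linear_combination h), Or.inl ⟨d, Or.inl rfl, by linear_combination ha⟩⟩
      · exact ⟨fun h => hb0 (by linear_combination -h), Or.inr ⟨m, Or.inr rfl, by linear_combination hb⟩⟩
  have hnbhd : ∀ v : ZMod n, (circulant n {d, m}).neighborFinset v
      = {v + a, v - a, v + b} := by
    intro v
    ext j
    rw [SimpleGraph.mem_neighborFinset, hadj]
    simp [Finset.mem_insert, Finset.mem_singleton]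
  -- cardinalities
  have hne1 : ∀ v : ZMod n, v ≠ v + a := fun v h => ha0 (by linear_combination -h)
  have hne2 : ∀ v : ZMod n, v ≠ v - a := fun v h => ha0 (by linear_combination h)
  have hne3 : ∀ v : ZMod n, v ≠ v + b := fun v h => hb0 (by linear_combination -h)
  have hne4 : ∀ v : ZMod n, v + a ≠ v - a := fun v h => haa (by linear_combination h)
  have hne5 : ∀ v : ZMod n, v + a ≠ v + b := fun v h => hab (by linear_combination h)
  have hne6 : ∀ v : ZMod n, v - a ≠ v + b := fun v h => hanb (by linear_combination -h)
  have hcard : ∀ (R : Finset (ZMod n)) (v : ZMod n),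
      ((insert v ({v + a, v - a, v + b} : Finset (ZMod n))) ∩ R).card
        = (if v ∈ R then 1 else 0) + (if v + a ∈ R then 1 else 0)
          + (if v - a ∈ R then 1 else 0) + (if v + b ∈ R then 1 else 0) := by
    intro R v
    rw [← Finset.filter_mem_eq_inter, Finset.card_filter]
    rw [Finset.sum_insert (by simp [hne1 v, hne2 v, hne3 v]),
        Finset.sum_insert (by simp [hne4 v, hne5 v]),
        Finset.sum_insert (by simp [hne6 v]), Finset.sum_singleton]
    ring
  have hcard4 : ∀ v : ZMod n,
      (insert v ({v + a, v - a, v + b} : Finset (ZMod n))).card = 4 := by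
    intro v
    rw [Finset.card_insert_of_notMem (by simp [hne1 v, hne2 v, hne3 v]),
        Finset.card_insert_of_notMem (by simp [hne4 v, hne5 v]),
        Finset.card_insert_of_notMem (by simp [hne6 v]), Finset.card_singleton]
  have hsplit : ∀ (R s : Finset (ZMod n)), (s ∩ R).card + (s ∩ Rᶜ).card = s.card := by
    intro R s
    rw [show s ∩ Rᶜ = s \ R from by ext x; simp [Finset.mem_sdiff, Finset.mem_compl]]
    exact Finset.card_inter_add_card_sdiff s R
  have hchar : ∀ R : Finset (ZMod n), (circulant n {d, m}).IsCNBColoring R ↔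
      ∀ v : ZMod n, (if v ∈ R then 1 else 0) + (if v + a ∈ R then 1 else 0)
          + (if v - a ∈ R then 1 else 0) + (if v + b ∈ R then 1 else 0) = 2 := by
    intro R
    unfold SimpleGraph.IsCNBColoring
    constructor
    · intro h v
      have h1 := h v
      rw [hnbhd v] at h1
      have h1' : (insert v ({v + a, v - a, v + b} : Finset (ZMod n)) ∩ R).card
          = (insert v ({v + a, v - a, v + b} : Finset (ZMod n)) ∩ Rᶜ).card := by
        convert h1 using 2 <;> · ext x; simp
      have h2 := hsplit R (insert v ({v + a, v - a, v + b} : Finset (ZMod n)))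
      rw [hcard4 v] at h2
      rw [← hcard R v]
      omega
    · intro h v
      rw [hnbhd v]
      have h1 := h v
      have h2 := hsplit R (insert v ({v + a, v - a, v + b} : Finset (ZMod n)))
      rw [hcard4 v] at h2
      rw [← hcard R v] at h1
      have h1' : (insert v ({v + a, v - a, v + b} : Finset (ZMod n)) ∩ R).card
          = (insert v ({v + a, v - a, v + b} : Finset (ZMod n)) ∩ Rᶜ).card := by
        omega
      convert h1' using 2 <;> · ext x; simp
  constructor
  · rintro ⟨R, hR⟩
    rw [hchar R] at hR
    by_contra h4
    have hmodd : m % 2 = 1 := by omega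
    exfalso
    have hneg : ∀ u : ZMod n,
        ((if u + (a + a) ∈ R then (1:ℤ) else 0) - (if u + (a + a) + b ∈ R then 1 else 0))
          = -((if u ∈ R then (1:ℤ) else 0) - (if u + b ∈ R then 1 else 0)) := by
      intro u
      have h1 := hR (u + a)
      have h2 := hR (u + a + b)
      rw [(show u + a + a = u + (a + a) by ring), (show u + a - a = u by ring)] at h1
      rw [(show u + a + b + a = u + (a + a) + b by ring),
          (show u + a + b - a = u + b by ring),
          (show u + a + b + b = u + a by linear_combination hb2)] at h2
      zify at h1 h2
      omega
    have hz : ∀ v : ZMod n,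
        ((if v ∈ R then (1:ℤ) else 0) - (if v + b ∈ R then 1 else 0)) = 0 := by
      intro v
      have hs := sign_iter
        (fun v => ((if v ∈ R then (1:ℤ) else 0) - (if v + b ∈ R then 1 else 0)))
        (a + a) hneg m v
      have hz1 : m • (a + a) = 0 := by
        rw [ha, ← Nat.cast_add, nsmul_eq_mul, ← Nat.cast_mul, hcast]
        exact ⟨d, by rw [hnm]; ring⟩
      rw [hz1, add_zero, Odd.neg_one_pow (Nat.odd_iff.mpr hmodd)] at hs
      have hs' : ((if v ∈ R then (1:ℤ) else 0) - (if v + b ∈ R then 1 else 0))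
          = -1 * ((if v ∈ R then (1:ℤ) else 0) - (if v + b ∈ R then 1 else 0)) := hs
      linarith
    have hiff_b : ∀ v : ZMod n, (v + b ∈ R ↔ v ∈ R) := by
      intro v
      have h0 := hz v
      by_cases h1 : v ∈ R <;> by_cases h2 : v + b ∈ R <;> simp [h1, h2] at h0 ⊢
    have hiff_a : ∀ v : ZMod n, (v + a ∈ R ↔ ¬ (v ∈ R)) := by
      intro v
      have h1 := hR v
      by_cases hv : v ∈ R <;> by_cases hva : v + a ∈ R <;> by_cases hvma : v - a ∈ R <;>
        simp [hv, hva, hvma, hiff_b v] at h1 ⊢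
    set F : ZMod n → ZMod 2 := fun v => if v ∈ R then 1 else 0 with hF
    have hFa : ∀ v, F (v + a) = F v + 1 := by
      intro v
      by_cases hv : v ∈ R <;> simp [hF, hiff_a v, hv] <;> decide
    have hFb : ∀ v, F (v + b) = F v := by
      intro v
      by_cases hv : v ∈ R <;> simp [hF, hiff_b v, hv]
    have hMA : m • a = d • b := by
      rw [ha, hb, nsmul_eq_mul, nsmul_eq_mul, ← Nat.cast_mul, ← Nat.cast_mul, Nat.mul_comm]
    have e1 := flip_iter F a hFa m 0
    have e2 := fix_iter F b hFb d 0
    rw [hMA, e2] at e1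
    have hm1 : ((m : ℕ) : ZMod 2) = 1 := by
      rw [← ZMod.natCast_mod m 2, hmodd, Nat.cast_one]
    rw [hm1] at e1
    exact absurd (by linear_combination -e1 : (1 : ZMod 2) = 0) one_ne_zero
  · intro h4
    have hmeven : m % 2 = 0 := by omega
    have hdodd : d % 2 = 1 := by
      rcases Nat.even_or_odd d with hd | hd
      · exfalso
        obtain ⟨k, hk⟩ := hd
        have h2g : (2:ℕ) ∣ Nat.gcd d m := Nat.dvd_gcd ⟨k, by omega⟩ ⟨m/2, by omega⟩
        rw [Nat.Coprime] at hcop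
        omega
      · exact Nat.odd_iff.mp hd
    have h2n : (2:ℕ) ∣ n := ⟨m, hnm⟩
    refine ⟨Finset.univ.filter (fun v => (ZMod.castHom h2n (ZMod 2)) v = 0), ?_⟩
    rw [hchar]
    intro v
    have hmem : ∀ w : ZMod n,
        (w ∈ Finset.univ.filter (fun v => (ZMod.castHom h2n (ZMod 2)) v = 0))
          ↔ (ZMod.castHom h2n (ZMod 2)) w = 0 := by
      intro w; rw [Finset.mem_filter]; exact ⟨fun h => h.2, fun h => ⟨Finset.mem_univ _, h⟩⟩
    have Pa : (ZMod.castHom h2n (ZMod 2)) a = 1 := by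
      rw [ha, map_natCast, ← ZMod.natCast_mod d 2, hdodd, Nat.cast_one]
    have Pb : (ZMod.castHom h2n (ZMod 2)) b = 0 := by
      rw [hb, map_natCast, ← ZMod.natCast_mod m 2, hmeven, Nat.cast_zero]
    simp only [hmem, map_add, map_sub, Pa, Pb, add_zero]
    have key : ∀ x : ZMod 2, ((if x = 0 then 1 else 0) + (if x + 1 = 0 then 1 else 0)
        + (if x - 1 = 0 then 1 else 0) + (if x = 0 then 1 else 0) : ℕ) = 2 := by decide
    exact key _
end

section
/- Let n ≡ 2 (mod 4) and let d₁, d₂ satisfy 1 ≤ d₁ < d₂ < n/2. Then the quintic circulant graph C_n(d₁, d₂, n/2) is a CNBC graph if and only if d₁ and d₂ have opposite parity (d₁ ≢ d₂ (mod 2)). -/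
open scoped Classical

section QCAux

private lemma qc_cast_ne_zero {n : ℕ} [NeZero n] {c : ℕ} (h1 : 0 < c) (h2 : c < n) :
    (c : ZMod n) ≠ 0 := by
  intro h
  rw [ZMod.natCast_eq_zero_iff] at h
  exact absurd (Nat.le_of_dvd h1 h) (not_le.2 h2)

private lemma qc_closed_nbhd {n d₁ d₂ : ℕ} [NeZero n] (hn : n % 4 = 2) (hd1 : 1 ≤ d₁)
    (hd12 : d₁ < d₂) (hd2 : d₂ < n / 2) (v : ZMod n) :
    insert v ((circulant n {d₁, d₂, n / 2}).neighborFinset v) =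
      {v, v + (d₁ : ZMod n), v - (d₁ : ZMod n), v + (d₂ : ZMod n), v - (d₂ : ZMod n),
        v + ((n / 2 : ℕ) : ZMod n)} := by
  have hd1ne : (d₁ : ZMod n) ≠ 0 := qc_cast_ne_zero (by omega) (by omega)
  have hd2ne : (d₂ : ZMod n) ≠ 0 := qc_cast_ne_zero (by omega) (by omega)
  have hhne : ((n / 2 : ℕ) : ZMod n) ≠ 0 := qc_cast_ne_zero (by omega) (by omega)
  have h2h : ((n / 2 : ℕ) : ZMod n) + ((n / 2 : ℕ) : ZMod n) = 0 := by
    rw [← Nat.cast_add, show n / 2 + n / 2 = n by omega, ZMod.natCast_self]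
  ext x
  simp only [Finset.mem_insert, Finset.mem_singleton, SimpleGraph.mem_neighborFinset]
  simp only [circulant, SimpleGraph.fromRel_adj, Finset.mem_insert, Finset.mem_singleton]
  constructor
  · rintro (rfl | ⟨hne, h | h⟩)
    · exact Or.inl rfl
    · obtain ⟨d, hd, heq⟩ := h
      rcases hd with rfl | rfl | rfl
      · exact Or.inr (Or.inr (Or.inl (by linear_combination -heq)))
      · exact Or.inr (Or.inr (Or.inr (Or.inr (Or.inl (by linear_combination -heq)))))
      · exact Or.inr (Or.inr (Or.inr (Or.inr (Or.inr (by linear_combination -heq - h2h)))))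
    · obtain ⟨d, hd, heq⟩ := h
      rcases hd with rfl | rfl | rfl
      · exact Or.inr (Or.inl (by linear_combination heq))
      · exact Or.inr (Or.inr (Or.inr (Or.inl (by linear_combination heq))))
      · exact Or.inr (Or.inr (Or.inr (Or.inr (Or.inr (by linear_combination heq)))))
  · rintro (rfl | rfl | rfl | rfl | rfl | rfl)
    · exact Or.inl rfl
    · exact Or.inr ⟨fun h => hd1ne (by linear_combination -h),
        Or.inr ⟨d₁, by simp, by ring⟩⟩
    · exact Or.inr ⟨fun h => hd1ne (by linear_combination h),
        Or.inl ⟨d₁, by simp, by ring⟩⟩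
    · exact Or.inr ⟨fun h => hd2ne (by linear_combination -h),
        Or.inr ⟨d₂, by simp, by ring⟩⟩
    · exact Or.inr ⟨fun h => hd2ne (by linear_combination h),
        Or.inl ⟨d₂, by simp, by ring⟩⟩
    · exact Or.inr ⟨fun h => hhne (by linear_combination -h),
        Or.inr ⟨n / 2, by simp, by ring⟩⟩

end QCAux

section QCAux2

private lemma qc_sum6 {n d₁ d₂ : ℕ} [NeZero n] (hn : n % 4 = 2) (hd1 : 1 ≤ d₁)
    (hd12 : d₁ < d₂) (hd2 : d₂ < n / 2) (v : ZMod n) (f : ZMod n → ℕ) :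
    ∑ x ∈ insert v ((circulant n {d₁, d₂, n / 2}).neighborFinset v), f x =
      f v + f (v + (d₁ : ZMod n)) + f (v - (d₁ : ZMod n)) + f (v + (d₂ : ZMod n)) +
        f (v - (d₂ : ZMod n)) + f (v + ((n / 2 : ℕ) : ZMod n)) := by
  have key : ∀ c : ℕ, 0 < c → c < n → (c : ZMod n) ≠ 0 := fun c h1 h2 => qc_cast_ne_zero h1 h2
  -- basic nonzero facts
  have n1 : (d₁ : ZMod n) ≠ 0 := key d₁ (by omega) (by omega)
  have n2 : (d₂ : ZMod n) ≠ 0 := key d₂ (by omega) (by omega)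
  have nh : ((n / 2 : ℕ) : ZMod n) ≠ 0 := key (n / 2) (by omega) (by omega)
  have n11 : (d₁ : ZMod n) + (d₁ : ZMod n) ≠ 0 := by
    have := key (d₁ + d₁) (by omega) (by omega); push_cast at this; exact this
  have n22 : (d₂ : ZMod n) + (d₂ : ZMod n) ≠ 0 := by
    have := key (d₂ + d₂) (by omega) (by omega); push_cast at this; exact this
  have n12 : (d₁ : ZMod n) + (d₂ : ZMod n) ≠ 0 := by
    have := key (d₁ + d₂) (by omega) (by omega); push_cast at this; exact this
  have n21 : (d₂ : ZMod n) - (d₁ : ZMod n) ≠ 0 := by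
    have := key (d₂ - d₁) (by omega) (by omega)
    rw [Nat.cast_sub (by omega)] at this; exact this
  have nh1 : ((n / 2 : ℕ) : ZMod n) - (d₁ : ZMod n) ≠ 0 := by
    have := key (n / 2 - d₁) (by omega) (by omega)
    rw [Nat.cast_sub (by omega)] at this; exact this
  have nh2 : ((n / 2 : ℕ) : ZMod n) - (d₂ : ZMod n) ≠ 0 := by
    have := key (n / 2 - d₂) (by omega) (by omega)
    rw [Nat.cast_sub (by omega)] at this; exact this
  have nh1' : ((n / 2 : ℕ) : ZMod n) + (d₁ : ZMod n) ≠ 0 := by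
    have := key (n / 2 + d₁) (by omega) (by omega); push_cast at this; exact this
  have nh2' : ((n / 2 : ℕ) : ZMod n) + (d₂ : ZMod n) ≠ 0 := by
    have := key (n / 2 + d₂) (by omega) (by omega); push_cast at this; exact this
  rw [qc_closed_nbhd hn hd1 hd12 hd2 v]
  rw [Finset.sum_insert (by
      simp only [Finset.mem_insert, Finset.mem_singleton]
      push_neg
      exact ⟨fun h => n1 (by linear_combination -h), fun h => n1 (by linear_combination h),
        fun h => n2 (by linear_combination -h), fun h => n2 (by linear_combination h),
        fun h => nh (by linear_combination -h)⟩)]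
  rw [Finset.sum_insert (by
      simp only [Finset.mem_insert, Finset.mem_singleton]
      push_neg
      exact ⟨fun h => n11 (by linear_combination h), fun h => n21 (by linear_combination -h),
        fun h => n12 (by linear_combination h), fun h => nh1 (by linear_combination -h)⟩)]
  rw [Finset.sum_insert (by
      simp only [Finset.mem_insert, Finset.mem_singleton]
      push_neg
      exact ⟨fun h => n12 (by linear_combination -h), fun h => n21 (by linear_combination h),
        fun h => nh1' (by linear_combination -h)⟩)]
  rw [Finset.sum_insert (by
      simp only [Finset.mem_insert, Finset.mem_singleton]
      push_neg
      exact ⟨fun h => n22 (by linear_combination h), fun h => nh2 (by linear_combination -h)⟩)]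
  rw [Finset.sum_insert (by
      simp only [Finset.mem_singleton]
      exact fun h => nh2' (by linear_combination -h))]
  rw [Finset.sum_singleton]
  ring

private lemma qc_card6 {n d₁ d₂ : ℕ} [NeZero n] (hn : n % 4 = 2) (hd1 : 1 ≤ d₁)
    (hd12 : d₁ < d₂) (hd2 : d₂ < n / 2) (v : ZMod n) :
    (insert v ((circulant n {d₁, d₂, n / 2}).neighborFinset v)).card = 6 := by
  rw [Finset.card_eq_sum_ones, qc_sum6 hn hd1 hd12 hd2 v (fun _ => 1)]

private lemma qc_card_inter {α : Type*} [DecidableEq α] (s t : Finset α) :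
    (s ∩ t).card = ∑ x ∈ s, if x ∈ t then 1 else 0 := by
  rw [← Finset.filter_mem_eq_inter, Finset.card_filter]

end QCAux2

private lemma qc_inter_compl {α : Type*} [Fintype α] [DecidableEq α] (s R : Finset α) :
    (s ∩ R).card + (s ∩ Rᶜ).card = s.card := by
  rw [← Finset.filter_mem_eq_inter, ← Finset.filter_mem_eq_inter]
  have h : s.filter (· ∈ Rᶜ) = s.filter (fun x => ¬ x ∈ R) := by
    ext x; simp
  rw [h, Finset.card_filter_add_card_filter_not]


/-- For `n ≡ 2 (mod 4)` and `1 ≤ d₁ < d₂ < n/2`, the quintic circulant `C_n(d₁, d₂, n/2)` is a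
CNBC graph iff `d₁` and `d₂` have opposite parity. -/
theorem quintic_circulant_cnbc_iff (n d₁ d₂ : ℕ) [NeZero n] (hn : n % 4 = 2)
    (hd1 : 1 ≤ d₁) (hd12 : d₁ < d₂) (hd2 : d₂ < n / 2) :
    (∃ R : Finset (ZMod n), (circulant n {d₁, d₂, n / 2}).IsCNBColoring R) ↔
      d₁ % 2 ≠ d₂ % 2 := by
  have hdvd : (2 : ℕ) ∣ n := by omega
  set φ : ZMod n →+* ZMod 2 := ZMod.castHom hdvd (ZMod 2) with hφdef
  have hφadd : ∀ (v : ZMod n) (d : ℕ), φ (v + (d : ZMod n)) = φ v + (d : ZMod 2) := by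
    intro v d; rw [map_add, map_natCast]
  have hφsub : ∀ (v : ZMod n) (d : ℕ), φ (v - (d : ZMod n)) = φ v - (d : ZMod 2) := by
    intro v d; rw [map_sub, map_natCast]
  have hφh : ((n / 2 : ℕ) : ZMod 2) = 1 := by
    have h1 : ((n / 2 % 2 : ℕ) : ZMod 2) = ((n / 2 : ℕ) : ZMod 2) := ZMod.natCast_mod _ 2
    rw [← h1, show n / 2 % 2 = 1 by omega, Nat.cast_one]
  set G := circulant n {d₁, d₂, n / 2} with hGdef
  constructor
  · -- CNBC → opposite parity
    rintro ⟨R, hR⟩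
    by_contra hpar
    have he : (d₁ : ZMod 2) = (d₂ : ZMod 2) := by
      rw [ZMod.natCast_eq_natCast_iff']; exact hpar
    have h3 : ∀ v : ZMod n, ((insert v (G.neighborFinset v)) ∩ R).card = 3 := by
      intro v
      have h1 : (insert v (G.neighborFinset v) ∩ R).card
          = (insert v (G.neighborFinset v) ∩ Rᶜ).card := by
        convert hR v using 2 <;> ext x <;> simp
      have h6 := qc_card6 hn hd1 hd12 hd2 v
      have hsum := qc_inter_compl (insert v (G.neighborFinset v)) R
      rw [← hGdef] at h6
      omega
    set E : ZMod 2 → Finset (ZMod n) := fun p => Finset.univ.filter (fun v => φ v = p)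
      with hEdef
    have hmemsymm : ∀ u v : ZMod n,
        (u ∈ insert v (G.neighborFinset v)) ↔ (v ∈ insert u (G.neighborFinset u)) := by
      intro u v
      simp only [Finset.mem_insert, SimpleGraph.mem_neighborFinset]
      rw [eq_comm, G.adj_comm]
    have hswap : ∀ p, ∑ v ∈ E p, ((insert v (G.neighborFinset v)) ∩ R).card
        = ∑ u ∈ R, ((insert u (G.neighborFinset u)) ∩ E p).card := by
      intro p
      calc ∑ v ∈ E p, ((insert v (G.neighborFinset v)) ∩ R).card
          = ∑ v ∈ E p, ∑ u ∈ R, if u ∈ insert v (G.neighborFinset v) then 1 else 0 := by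
            refine Finset.sum_congr rfl fun v _ => ?_
            rw [Finset.inter_comm, qc_card_inter]
        _ = ∑ u ∈ R, ∑ v ∈ E p, if u ∈ insert v (G.neighborFinset v) then 1 else 0 :=
            Finset.sum_comm
        _ = ∑ u ∈ R, ((insert u (G.neighborFinset u)) ∩ E p).card := by
            refine Finset.sum_congr rfl fun u _ => ?_
            rw [Finset.inter_comm, qc_card_inter]
            exact Finset.sum_congr rfl fun v _ => by simp only [hmemsymm]
    have hcount : ∀ (u : ZMod n) (p : ZMod 2),
        ((insert u (G.neighborFinset u)) ∩ E p).card
          = if φ u = p + (d₁ : ZMod 2) then 5 else 1 := by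
      intro u p
      rw [hGdef, qc_card_inter, qc_sum6 hn hd1 hd12 hd2 u]
      simp only [hEdef, Finset.mem_filter, Finset.mem_univ, true_and]
      rw [hφadd, hφadd, hφadd, hφsub, hφsub, hφh, ← he]
      generalize φ u = q
      generalize (d₁ : ZMod 2) = e
      revert q p e; decide
    have hnef : ∀ (s : Finset (ZMod n)) (z : ZMod 2),
        s.filter (fun u => ¬ φ u = z) = s.filter (fun u => φ u = z + 1) := by
      intro s z
      have hzz : ∀ a b : ZMod 2, (¬ a = b) ↔ a = b + 1 := by decide
      ext u; simp only [Finset.mem_filter, hzz]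
    have hsplit : ∀ p : ZMod 2, ∑ u ∈ R, ((insert u (G.neighborFinset u)) ∩ E p).card
        = 5 * (R.filter (fun u => φ u = p + (d₁ : ZMod 2))).card
          + (R.filter (fun u => φ u = p + (d₁ : ZMod 2) + 1)).card := by
      intro p
      rw [Finset.sum_congr rfl (fun u _ => hcount u p), Finset.sum_ite, ← hnef]
      simp [Finset.sum_const, mul_comm]
    have hsumE : ∀ p, ∑ v ∈ E p, ((insert v (G.neighborFinset v)) ∩ R).card
        = 3 * (E p).card := by
      intro p
      rw [Finset.sum_congr rfl (fun v _ => h3 v), Finset.sum_const, smul_eq_mul, mul_comm]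
    have eq0 := (hsumE 0).symm.trans ((hswap 0).trans (hsplit 0))
    have eq1 := (hsumE 1).symm.trans ((hswap 1).trans (hsplit 1))
    have hEcards : (E 0).card + (E 1).card = n := by
      have h := Finset.card_filter_add_card_filter_not
        (s := (Finset.univ : Finset (ZMod n))) (p := fun v => φ v = 0)
      rw [hnef Finset.univ 0] at h
      have h01 : (0 : ZMod 2) + 1 = 1 := by decide
      rw [h01] at h
      simpa [hEdef, Finset.card_univ, ZMod.card] using h
    have hEeq : (E 0).card = (E 1).card := by
      refine Finset.card_nbij' (· + 1) (· - 1) ?_ ?_ ?_ ?_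
      · intro a ha
        simp only [hEdef, Finset.mem_coe, Finset.mem_filter, Finset.mem_univ, true_and] at ha ⊢
        rw [map_add, map_one, ha, zero_add]
      · intro a ha
        simp only [hEdef, Finset.mem_coe, Finset.mem_filter, Finset.mem_univ, true_and] at ha ⊢
        rw [map_sub, map_one, ha, sub_self]
      · intro a _; ring
      · intro a _; ring
    have hcases : ∀ x : ZMod 2, x = 0 ∨ x = 1 := by decide
    have s00 : (0 : ZMod 2) + 0 = 0 := by decide
    have s01 : (0 : ZMod 2) + 1 = 1 := by decide
    have s10 : (1 : ZMod 2) + 0 = 1 := by decide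
    have s11 : (1 : ZMod 2) + 1 = 0 := by decide
    rcases hcases ((d₁ : ℕ) : ZMod 2) with h | h <;>
      rw [h] at eq0 eq1 <;>
      simp only [s00, s01, s10, s11] at eq0 eq1 <;>
      omega
  · -- opposite parity → CNBC
    intro hpar
    have he : (d₁ : ZMod 2) ≠ (d₂ : ZMod 2) := by
      rw [Ne, ZMod.natCast_eq_natCast_iff']; exact hpar
    refine ⟨Finset.univ.filter (fun v => φ v = 0), fun v => ?_⟩
    have h3 : (insert v (G.neighborFinset v) ∩ Finset.univ.filter (fun v => φ v = 0)).card
        = 3 := by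
      rw [hGdef, qc_card_inter, qc_sum6 hn hd1 hd12 hd2 v]
      simp only [Finset.mem_filter, Finset.mem_univ, true_and]
      rw [hφadd, hφadd, hφadd, hφsub, hφsub, hφh]
      generalize φ v = q
      revert he
      generalize (d₁ : ZMod 2) = e₁
      generalize (d₂ : ZMod 2) = e₂
      revert q e₁ e₂; decide
    have h6 := qc_card6 hn hd1 hd12 hd2 v
    rw [← hGdef] at h6
    have hsum := qc_inter_compl (insert v (G.neighborFinset v))
      (Finset.univ.filter (fun v => φ v = 0))
    have key : (insert v (G.neighborFinset v) ∩ Finset.univ.filter (fun v => φ v = 0)).card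
        = (insert v (G.neighborFinset v) ∩ (Finset.univ.filter (fun v => φ v = 0))ᶜ).card := by
      omega
    convert key using 2 <;> ext x <;> simp
end

section
/- If G is a finite simple graph admitting a CNB-coloring and H is any finite simple graph, then the strong product G ⊠ H is a CNBC graph. -/
open scoped Classical

/-- The strong product `G ⊠ H`: `(g, h)` is adjacent to `(g', h')` iff (`g = g'` and
`h h' ∈ E(H)`), or (`h = h'` and `g g' ∈ E(G)`), or (`g g' ∈ E(G)` and `h h' ∈ E(H)`). -/
def SimpleGraph.strongProd {V W : Type*} (G : SimpleGraph V) (H : SimpleGraph W) :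
    SimpleGraph (V × W) where
  Adj x y :=
    (x.1 = y.1 ∧ H.Adj x.2 y.2) ∨ (x.2 = y.2 ∧ G.Adj x.1 y.1) ∨
      (G.Adj x.1 y.1 ∧ H.Adj x.2 y.2)
  symm := by
    constructor
    rintro x y (⟨h1, h2⟩ | ⟨h1, h2⟩ | ⟨h1, h2⟩)
    · exact Or.inl ⟨h1.symm, h2.symm⟩
    · exact Or.inr (Or.inl ⟨h1.symm, h2.symm⟩)
    · exact Or.inr (Or.inr ⟨h1.symm, h2.symm⟩)
  loopless := by constructor; rintro x (⟨h1, h2⟩ | ⟨h1, h2⟩ | ⟨h1, h2⟩) <;> simp_all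

/-- If `G` is a CNBC graph, then for any graph `H` the strong product `G ⊠ H` is a CNBC
graph. -/
theorem strongProd_cnbc {V W : Type*} [Fintype V] [Fintype W]
    (G : SimpleGraph V) (H : SimpleGraph W)
    (hG : ∃ R : Finset V, G.IsCNBColoring R) :
    ∃ R : Finset (V × W), (G.strongProd H).IsCNBColoring R := by
  obtain ⟨R, hR⟩ := hG
  refine ⟨R ×ˢ (Finset.univ : Finset W), ?_⟩
  rintro ⟨g, h⟩
  have hcard : ((insert g (G.neighborFinset g) ∩ R) ×ˢ insert h (H.neighborFinset h)).card =
      ((insert g (G.neighborFinset g) ∩ Rᶜ) ×ˢ insert h (H.neighborFinset h)).card := by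
    rw [Finset.card_product, Finset.card_product, hR g]
  convert hcard using 2
  · ext ⟨a, b⟩
    simp only [Finset.mem_inter, Finset.mem_insert, SimpleGraph.mem_neighborFinset]
    simp only [Finset.mem_inter, Finset.mem_insert, SimpleGraph.mem_neighborFinset,
      Finset.mem_product, Finset.mem_univ, and_true, SimpleGraph.strongProd,
      Prod.ext_iff, eq_comm]
    tauto
  · ext ⟨a, b⟩
    simp only [Finset.mem_inter, Finset.mem_insert, SimpleGraph.mem_neighborFinset]
    simp only [Finset.mem_inter, Finset.mem_insert, SimpleGraph.mem_neighborFinset,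
      Finset.mem_product, Finset.mem_univ, and_true, SimpleGraph.strongProd,
      Prod.ext_iff, eq_comm, Finset.mem_compl]
    tauto
end
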